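/- arXiv:2502.13375 — 13 statements merged into one kernel-verified Lean document; each statement's English description precedes it below -/
import Mathlib

section
/- Let c be an equilibrium under the difference-seeking utility U_# on a finite simple graph G with minimum degree δ, and let u, v be vertices with c(u) ≠ c(v). Then U_#(c,u) + U_#(c,v) ≥ δ. -/
open SimpleGraph Finset

/-- The coloring obtained from `c` by swapping the colors (agents) at `u` and `v`. -/
def swapColoring {V : Type*} [DecidableEq V] {t : ℕ} (c : V → Fin t) (u v : V) : V → Fin t :=
  fun w => if w = u then c v else if w = v then c u else c w

/-- The binary utility `U_b`: 1 if some neighbor has a different type, 0 otherwise. -/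
def Ub {V : Type*} [Fintype V] (G : SimpleGraph V) [DecidableRel G.Adj]
    {t : ℕ} (c : V → Fin t) (v : V) : ℕ :=
  if ∃ w ∈ G.neighborFinset v, c w ≠ c v then 1 else 0

/-- The difference-seeking utility `U_#`: the number of neighbors of a different type. -/
def Usharp {V : Type*} [Fintype V] (G : SimpleGraph V) [DecidableRel G.Adj]
    {t : ℕ} (c : V → Fin t) (v : V) : ℕ :=
  ((G.neighborFinset v).filter fun w => c w ≠ c v).card

/-- `T_c(v)`: the set of types present in the neighborhood of `v`. -/
def typesIn {V : Type*} [Fintype V] (G : SimpleGraph V) [DecidableRel G.Adj]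
    {t : ℕ} (c : V → Fin t) (v : V) : Finset (Fin t) :=
  (G.neighborFinset v).image c

/-- The variety-seeking utility `U_τ`: the number of types other than `c v` in the
neighborhood of `v`. -/
def Utau {V : Type*} [Fintype V] (G : SimpleGraph V) [DecidableRel G.Adj]
    {t : ℕ} (c : V → Fin t) (v : V) : ℕ :=
  ((typesIn G c v).erase (c v)).card

/-- The swap of `u` and `v` is improving under utility `U`. -/
def ImprovingSwap {V : Type*} [DecidableEq V] {t : ℕ}
    (U : (V → Fin t) → V → ℕ) (c : V → Fin t) (u v : V) : Prop :=
  U c u < U (swapColoring c u v) v ∧ U c v < U (swapColoring c u v) u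

/-- `c` is an equilibrium under the utility `U`: no improving swap exists. -/
def Equilibrium {V : Type*} [DecidableEq V] {t : ℕ}
    (U : (V → Fin t) → V → ℕ) (c : V → Fin t) : Prop :=
  ∀ u v : V, c u ≠ c v → ¬ ImprovingSwap U c u v

/-- The number of monochromatic edges of `c`. -/
def monoCount {V : Type*} [Fintype V] [DecidableEq V] (G : SimpleGraph V) [DecidableRel G.Adj]
    {t : ℕ} (c : V → Fin t) : ℕ :=
  (G.edgeFinset.filter fun e => (e.map c).IsDiag).card

/-- The number of colorful edges of `c`. -/
def ceCount {V : Type*} [Fintype V] [DecidableEq V] (G : SimpleGraph V) [DecidableRel G.Adj]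
    {t : ℕ} (c : V → Fin t) : ℕ :=
  (G.edgeFinset.filter fun e => ¬ (e.map c).IsDiag).card

/-- The cycle graph on `ZMod n`: `i` adjacent to `i + 1` and `i - 1`. -/
def cycleZMod (n : ℕ) : SimpleGraph (ZMod n) := SimpleGraph.circulantGraph {1}

instance (n : ℕ) : DecidableRel (cycleZMod n).Adj := fun a b =>
  decidable_of_iff (a ≠ b ∧ (a - b = 1 ∨ b - a = 1)) (by simp [cycleZMod])

instance {α β : Type*} (G : SimpleGraph α) (H : SimpleGraph β)
    [DecidableRel G.Adj] [DecidableRel H.Adj] [DecidableEq α] [DecidableEq β] :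
    DecidableRel (G □ H).Adj := fun x y =>
  decidable_of_iff (G.Adj x.1 y.1 ∧ x.2 = y.2 ∨ H.Adj x.2 y.2 ∧ x.1 = y.1)
    (SimpleGraph.boxProd_adj).symm

lemma swapColoring_comm {V : Type*} [DecidableEq V] {t : ℕ} (c : V → Fin t) (u v : V) :
    swapColoring c u v = swapColoring c v u := by
  funext w
  unfold swapColoring
  by_cases h1 : w = u <;> by_cases h2 : w = v <;> simp_all

lemma key_deg {V : Type*} [Fintype V] [DecidableEq V] (G : SimpleGraph V) [DecidableRel G.Adj]
    {t : ℕ} (c : V → Fin t) (u v : V) (h : c u ≠ c v) :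
    G.degree v ≤ Usharp G c v + Usharp G (swapColoring c u v) v := by
  have hvu : v ≠ u := fun e => h (by rw [e])
  unfold Usharp
  rw [← SimpleGraph.card_neighborFinset_eq_degree]
  have hsub : G.neighborFinset v ⊆
      ((G.neighborFinset v).filter fun w => c w ≠ c v) ∪
      ((G.neighborFinset v).filter fun w => swapColoring c u v w ≠ swapColoring c u v v) := by
    intro w hw
    by_cases hc : c w = c v
    · apply Finset.mem_union_right
      rw [Finset.mem_filter]
      refine ⟨hw, ?_⟩
      have hwv : w ≠ v := (G.ne_of_adj (by simpa using hw)).symm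
      have hwu : w ≠ u := fun e => h (by rw [← e, hc])
      simp only [swapColoring, if_neg hwu, if_neg hwv, if_neg hvu, if_pos rfl, hc]
      exact fun e => h e.symm
    · exact Finset.mem_union_left _ (Finset.mem_filter.mpr ⟨hw, hc⟩)
  calc (G.neighborFinset v).card ≤ _ := Finset.card_le_card hsub
    _ ≤ _ := Finset.card_union_le _ _

theorem stmt0 {V : Type*} [Fintype V] [DecidableEq V] (G : SimpleGraph V) [DecidableRel G.Adj]
    {t : ℕ} (ht : 2 ≤ t) (c : V → Fin t) (heq : Equilibrium (Usharp G) c)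
    (u v : V) (huv : c u ≠ c v) :
    G.minDegree ≤ Usharp G c u + Usharp G c v := by
  have hni := heq u v huv
  unfold ImprovingSwap at hni
  rw [not_and_or, not_lt, not_lt] at hni
  rcases hni with h | h
  · calc G.minDegree ≤ G.degree v := G.minDegree_le_degree v
      _ ≤ Usharp G c v + Usharp G (swapColoring c u v) v := key_deg G c u v huv
      _ ≤ Usharp G c v + Usharp G c u := by omega
      _ = Usharp G c u + Usharp G c v := by omega
  · calc G.minDegree ≤ G.degree u := G.minDegree_le_degree u
      _ ≤ Usharp G c u + Usharp G (swapColoring c v u) u := key_deg G c v u huv.symm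
      _ = Usharp G c u + Usharp G (swapColoring c u v) u := by rw [swapColoring_comm]
      _ ≤ Usharp G c u + Usharp G c v := by omega
end

section
/- Let c be an equilibrium under the difference-seeking utility U_# on a finite simple graph G with minimum degree δ, and let u, v be adjacent vertices with c(u) ≠ c(v). Then U_#(c,u) + U_#(c,v) ≥ δ + 1. -/
open SimpleGraph Finset

lemma swap_usharp {V : Type*} [Fintype V] [DecidableEq V] (G : SimpleGraph V)
    [DecidableRel G.Adj] {t : ℕ} (c : V → Fin t) (u v : V) (hadj : G.Adj u v)
    (huv : c u ≠ c v) :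
    Usharp G (swapColoring c u v) v
      = ((G.neighborFinset v).filter fun w => c w ≠ c u).card + 1 := by
  have hne : v ≠ u := hadj.ne'
  have hset : ((G.neighborFinset v).filter fun w => swapColoring c u v w ≠ swapColoring c u v v)
      = insert u ((G.neighborFinset v).filter fun w => c w ≠ c u) := by
    ext w
    simp only [swapColoring, Finset.mem_filter, Finset.mem_insert, SimpleGraph.mem_neighborFinset,
      if_neg hne, if_pos rfl]
    by_cases hw : w = u
    · subst hw
      simp [hadj.symm, huv, Ne.symm huv]
    · have : w ∈ G.neighborFinset v → w ≠ v := fun h =>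
        (G.ne_of_adj (by simpa using h)).symm
      by_cases hwv : w = v
      · subst hwv
        simp [hne, hw]
      · simp [hw, hwv]
  have hu : u ∉ ((G.neighborFinset v).filter fun w => c w ≠ c u) := by
    simp
  rw [Usharp, hset, Finset.card_insert_of_notMem hu]

theorem stmt2 {V : Type*} [Fintype V] [DecidableEq V] (G : SimpleGraph V) [DecidableRel G.Adj]
    {t : ℕ} (ht : 2 ≤ t) (c : V → Fin t) (heq : Equilibrium (Usharp G) c)
    (u v : V) (hadj : G.Adj u v) (huv : c u ≠ c v) :
    G.minDegree + 1 ≤ Usharp G c u + Usharp G c v := by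
  have hvu := hadj.symm
  have h1 : Usharp G (swapColoring c u v) v
      = ((G.neighborFinset v).filter fun w => c w ≠ c u).card + 1 :=
    swap_usharp G c u v hadj huv
  have h2 : Usharp G (swapColoring c u v) u
      = ((G.neighborFinset u).filter fun w => c w ≠ c v).card + 1 := by
    have := swap_usharp G c v u hvu (Ne.symm huv)
    have hcomm : swapColoring c v u = swapColoring c u v := by
      funext w
      simp only [swapColoring]
      by_cases h1 : w = u <;> by_cases h2 : w = v <;> simp_all
    rwa [hcomm] at this
  have hcov1 : G.degree v ≤ ((G.neighborFinset v).filter fun w => c w ≠ c u).card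
      + Usharp G c v := by
    rw [SimpleGraph.degree, Usharp]
    calc (G.neighborFinset v).card
        ≤ (((G.neighborFinset v).filter fun w => c w ≠ c u)
          ∪ ((G.neighborFinset v).filter fun w => c w ≠ c v)).card := by
          apply Finset.card_le_card
          intro w hw
          rcases ne_or_eq (c w) (c u) with h | h
          · exact Finset.mem_union_left _ (Finset.mem_filter.mpr ⟨hw, h⟩)
          · exact Finset.mem_union_right _ (Finset.mem_filter.mpr ⟨hw, h ▸ huv⟩)
      _ ≤ _ := Finset.card_union_le _ _
  have hcov2 : G.degree u ≤ ((G.neighborFinset u).filter fun w => c w ≠ c v).card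
      + Usharp G c u := by
    rw [SimpleGraph.degree, Usharp]
    calc (G.neighborFinset u).card
        ≤ (((G.neighborFinset u).filter fun w => c w ≠ c v)
          ∪ ((G.neighborFinset u).filter fun w => c w ≠ c u)).card := by
          apply Finset.card_le_card
          intro w hw
          rcases ne_or_eq (c w) (c v) with h | h
          · exact Finset.mem_union_left _ (Finset.mem_filter.mpr ⟨hw, h⟩)
          · exact Finset.mem_union_right _ (Finset.mem_filter.mpr ⟨hw, h ▸ Ne.symm huv⟩)
      _ ≤ _ := Finset.card_union_le _ _
  have hmu := G.minDegree_le_degree u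
  have hmv := G.minDegree_le_degree v
  have heq' := heq u v huv
  rw [ImprovingSwap, not_and_or, not_lt, not_lt, h1, h2] at heq'
  rcases heq' with h | h
  · omega
  · omega
end

section
/- Let c be an equilibrium under the difference-seeking utility U_# on a finite simple graph G with minimum degree δ, and fix r with 0 ≤ r < δ. Let q be the number of types i ∈ Fin t for which there exists a vertex v with c(v) = i and U_#(c,v) = r (i.e., exactly r colorful edges are incident to v). Then (q − 1)·(δ − r) ≤ 2r; equivalently, q ≤ 2r/(δ − r) + 1. -/
open SimpleGraph Finset

lemma usharp_swap_le {V : Type*} [Fintype V] [DecidableEq V] (G : SimpleGraph V)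
    [DecidableRel G.Adj] {t : ℕ} (c : V → Fin t) {u v : V} (huv : c u ≠ c v) (r : ℕ)
    (h : Usharp G (swapColoring c u v) v ≤ r) :
    G.minDegree - r ≤ ((G.neighborFinset v).filter fun w => c w = c u).card := by
  have hvu : v ≠ u := fun h => huv (by rw [h])
  have hcv : swapColoring c u v v = c u := by simp [swapColoring, hvu]
  have hsub : ((G.neighborFinset v).filter fun w => ¬ c w = c u)
      ⊆ ((G.neighborFinset v).filter fun w =>
          swapColoring c u v w ≠ swapColoring c u v v) := by
    intro w hw
    simp only [mem_filter] at hw ⊢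
    refine ⟨hw.1, ?_⟩
    rw [hcv]
    have hwu : w ≠ u := fun h => hw.2 (h ▸ rfl)
    have hwv : w ≠ v := by
      intro h; subst h
      exact G.loopless.irrefl w (by simpa [SimpleGraph.mem_neighborFinset] using hw.1)
    simpa [swapColoring, hwu, hwv] using hw.2
  unfold Usharp at h
  have h1 : ((G.neighborFinset v).filter fun w => ¬ c w = c u).card ≤ r :=
    le_trans (card_le_card hsub) h
  have h2 : G.minDegree ≤ (G.neighborFinset v).card := by
    rw [card_neighborFinset_eq_degree]; exact G.minDegree_le_degree v
  have h3 := card_filter_add_card_filter_not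
    (s := G.neighborFinset v) (p := fun w => c w = c u)
  omega

lemma key_disj {V : Type*} [Fintype V] [DecidableEq V] (G : SimpleGraph V)
    [DecidableRel G.Adj] {t : ℕ} (c : V → Fin t) (heq : Equilibrium (Usharp G) c)
    {r : ℕ} {u v : V} (huv : c u ≠ c v) (hu : Usharp G c u = r) (hv : Usharp G c v = r) :
    G.minDegree - r ≤ ((G.neighborFinset u).filter fun w => c w = c v).card ∨
    G.minDegree - r ≤ ((G.neighborFinset v).filter fun w => c w = c u).card := by
  have hni := heq u v huv
  rw [ImprovingSwap, not_and_or, not_lt, not_lt, hu, hv] at hni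
  rcases hni with h | h
  · exact Or.inr (usharp_swap_le G c huv r h)
  · rw [swapColoring_comm] at h
    exact Or.inl (usharp_swap_le G c huv.symm r h)

theorem stmt3 {V : Type*} [Fintype V] [DecidableEq V] (G : SimpleGraph V) [DecidableRel G.Adj]
    {t : ℕ} (ht : 2 ≤ t) (c : V → Fin t) (heq : Equilibrium (Usharp G) c)
    (r : ℕ) (hr : r < G.minDegree) :
    (((Finset.univ : Finset (Fin t)).filter fun i =>
        ∃ v : V, c v = i ∧ Usharp G c v = r).card - 1) * (G.minDegree - r) ≤ 2 * r := by
  classical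
  set Q : Finset (Fin t) := (Finset.univ : Finset (Fin t)).filter fun i =>
      ∃ v : V, c v = i ∧ Usharp G c v = r with hQ
  set q : ℕ := Q.card with hq
  rcases Nat.eq_zero_or_pos q with h0 | hqpos
  · simp [h0]
  -- a witness vertex exists, so V is nonempty
  obtain ⟨i₀, hi₀⟩ := Finset.card_pos.mp hqpos
  obtain ⟨v₀, -, -⟩ := (Finset.mem_filter.mp hi₀).2
  haveI : Nonempty V := ⟨v₀⟩
  set wit : Fin t → V := fun i =>
    if h : ∃ v : V, c v = i ∧ Usharp G c v = r then h.choose else Classical.arbitrary V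
    with hwit
  have hwit_spec : ∀ i ∈ Q, c (wit i) = i ∧ Usharp G c (wit i) = r := by
    intro i hi
    have h := (Finset.mem_filter.mp hi).2
    simp only [hwit, dif_pos h]
    exact h.choose_spec
  set d : ℕ := G.minDegree - r with hd
  set pred : Fin t → Fin t → Prop :=
    fun i j => d ≤ ((G.neighborFinset (wit i)).filter fun w => c w = j).card with hpred
  have hdisj : ∀ i ∈ Q, ∀ j ∈ Q, i ≠ j → pred i j ∨ pred j i := by
    intro i hi j hj hij
    have hi' := hwit_spec i hi
    have hj' := hwit_spec j hj
    have hne : c (wit i) ≠ c (wit j) := by rw [hi'.1, hj'.1]; exact hij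
    have := key_disj G c heq hne hi'.2 hj'.2
    rw [hi'.1, hj'.1] at this
    exact this
  set S : Finset (Fin t × Fin t) := Q.offDiag.filter (fun p => pred p.1 p.2) with hS
  -- Step 1: q * (q - 1) ≤ 2 * S.card
  have step1 : q * (q - 1) ≤ 2 * S.card := by
    have hTS : (Q.offDiag.filter (fun p => ¬ pred p.1 p.2)).card ≤ S.card := by
      apply Finset.card_le_card_of_injOn Prod.swap
      · intro p hp
        simp only [hS, Finset.mem_coe, Finset.mem_filter, Finset.mem_offDiag, Prod.fst_swap,
          Prod.snd_swap] at hp ⊢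
        obtain ⟨⟨h1, h2, h3⟩, h4⟩ := hp
        refine ⟨⟨h2, h1, h3.symm⟩, ?_⟩
        rcases hdisj p.1 h1 p.2 h2 h3 with h | h
        · exact absurd h h4
        · exact h
      · intro a _ b _ hab
        exact Prod.swap_injective hab
    have hsplit := card_filter_add_card_filter_not
      (s := Q.offDiag) (p := fun p => pred p.1 p.2)
    rw [← hS] at hsplit
    have hoff : Q.offDiag.card = q * q - q := by rw [Finset.offDiag_card]
    have : q * q - q ≤ 2 * S.card := by omega
    calc q * (q - 1) = q * q - q := by rw [Nat.mul_sub_one]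
      _ ≤ 2 * S.card := this
  -- Step 2: S.card * d ≤ q * r
  have step2 : S.card * d ≤ q * r := by
    have hfib : S.card = ∑ i ∈ Q, (S.filter fun p => p.1 = i).card := by
      apply Finset.card_eq_sum_card_fiberwise
      intro p hp
      exact (Finset.mem_offDiag.mp (Finset.mem_filter.mp hp).1).1
    rw [hfib, Finset.sum_mul]
    have hbound : ∀ i ∈ Q, (S.filter fun p => p.1 = i).card * d ≤ r := by
      intro i hi
      set J : Finset (Fin t) := (S.filter fun p => p.1 = i).image Prod.snd with hJ
      have hcard : (S.filter fun p => p.1 = i).card = J.card := by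
        rw [hJ]
        rw [Finset.card_image_of_injOn]
        intro a ha b hb hab
        have ha1 : a.1 = i := (Finset.mem_filter.mp ha).2
        have hb1 : b.1 = i := (Finset.mem_filter.mp hb).2
        exact Prod.ext (ha1.trans hb1.symm) hab
      have hJmem : ∀ j ∈ J, j ≠ i ∧ pred i j := by
        intro j hj
        obtain ⟨p, hp, hp2⟩ := Finset.mem_image.mp hj
        obtain ⟨hpS, hp1⟩ := Finset.mem_filter.mp hp
        obtain ⟨hoff, hpred'⟩ := Finset.mem_filter.mp hpS
        have hne := (Finset.mem_offDiag.mp hoff).2.2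
        subst hp2
        rw [hp1] at hne hpred'
        exact ⟨hne.symm, hpred'⟩
      -- sum of fibers over J is at most r
      have hsum : ∑ j ∈ J, ((G.neighborFinset (wit i)).filter fun w => c w = j).card ≤ r := by
        have heqsum : ((G.neighborFinset (wit i)).filter fun w => c w ∈ J).card
            = ∑ j ∈ J, ((G.neighborFinset (wit i)).filter fun w => c w = j).card := by
          rw [Finset.card_eq_sum_card_fiberwise (f := c) (t := J)
            (s := (G.neighborFinset (wit i)).filter fun w => c w ∈ J)
            (fun x hx => (Finset.mem_filter.mp hx).2)]
          apply Finset.sum_congr rfl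
          intro j hj
          rw [Finset.filter_filter]
          congr 1
          apply Finset.filter_congr
          intro x _
          simp only [and_iff_right_iff_imp]
          intro hx; rw [hx]; exact hj
        rw [← heqsum]
        have hQi : c (wit i) = i := (hwit_spec i hi).1
        have hsub : ((G.neighborFinset (wit i)).filter fun w => c w ∈ J)
            ⊆ ((G.neighborFinset (wit i)).filter fun w => c w ≠ c (wit i)) := by
          intro x hx
          simp only [Finset.mem_filter] at hx ⊢
          exact ⟨hx.1, by rw [hQi]; exact (hJmem _ hx.2).1⟩
        calc ((G.neighborFinset (wit i)).filter fun w => c w ∈ J).card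
            ≤ ((G.neighborFinset (wit i)).filter fun w => c w ≠ c (wit i)).card :=
              Finset.card_le_card hsub
          _ = r := (hwit_spec i hi).2
      calc (S.filter fun p => p.1 = i).card * d = J.card * d := by rw [hcard]
        _ = ∑ _j ∈ J, d := by rw [Finset.sum_const, smul_eq_mul, mul_comm]
        _ ≤ ∑ j ∈ J, ((G.neighborFinset (wit i)).filter fun w => c w = j).card :=
            Finset.sum_le_sum (fun j hj => (hJmem j hj).2)
        _ ≤ r := hsum
    calc ∑ i ∈ Q, (S.filter fun p => p.1 = i).card * d ≤ ∑ _i ∈ Q, r :=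
          Finset.sum_le_sum hbound
      _ = q * r := by rw [Finset.sum_const, smul_eq_mul]
  -- combine
  have : q * ((q - 1) * d) ≤ q * (2 * r) := by
    calc q * ((q - 1) * d) = (q * (q - 1)) * d := by ring
      _ ≤ (2 * S.card) * d := Nat.mul_le_mul_right d step1
      _ = 2 * (S.card * d) := by ring
      _ ≤ 2 * (q * r) := Nat.mul_le_mul_left 2 step2
      _ = q * (2 * r) := by ring
  exact Nat.le_of_mul_le_mul_left this hqpos
end

section
/- Let c be a coloring of a finite simple graph G and let u, v be vertices with c(u) ≠ c(v). The swap of u and v is improving under the variety-seeking utility U_τ if and only if all of the following hold: (i) u and v are not adjacent; (ii) U_τ(c,u) = U_τ(c,v); (iii) c(u) ∈ T_c(u) \ T_c(v) and c(v) ∈ T_c(v) \ T_c(u). -/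
open SimpleGraph Finset

private lemma keyArith {α : Type*} [DecidableEq α] (A B : Finset α) (a b : α) :
    ((A.erase a).card < (B.erase a).card ∧ (B.erase b).card < (A.erase b).card) ↔
      ((A.erase a).card = (B.erase b).card ∧ (a ∈ A ∧ a ∉ B) ∧ (b ∈ B ∧ b ∉ A)) := by
  have h1 : ∀ (s : Finset α) (x : α),
      s.card = (s.erase x).card + if x ∈ s then 1 else 0 := by
    intro s x
    split_ifs with h
    · exact (Finset.card_erase_add_one h).symm
    · simp [Finset.erase_eq_of_notMem h]
  have eAa := h1 A a
  have eAb := h1 A b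
  have eBa := h1 B a
  have eBb := h1 B b
  by_cases haA : a ∈ A <;> by_cases haB : a ∈ B <;>
    by_cases hbA : b ∈ A <;> by_cases hbB : b ∈ B <;>
    simp only [haA, haB, hbA, hbB, if_true, if_false] at eAa eAb eBa eBb <;>
    simp only [haA, haB, hbA, hbB, not_true, not_false_iff, not_false_eq_true,
      true_and, and_true, false_and, and_false, iff_true, iff_false] <;>
    first
      | omega
      | (constructor <;> intro h <;> omega)
      | (intro h; omega)

private lemma auxIns {α : Type*} [DecidableEq α] {B : Finset α} {a b : α}
    (haB : a ∈ B) : ((insert b B).erase a).card ≤ (B.erase b).card := by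
  by_cases hbB : b ∈ B
  · rw [Finset.insert_eq_self.2 hbB, Finset.card_erase_of_mem haB,
      Finset.card_erase_of_mem hbB]
  · rw [Finset.erase_eq_of_notMem hbB,
      Finset.card_erase_of_mem (Finset.mem_insert_of_mem haB),
      Finset.card_insert_of_notMem hbB]
    omega

theorem stmt4 {V : Type*} [Fintype V] [DecidableEq V] (G : SimpleGraph V) [DecidableRel G.Adj]
    {t : ℕ} (ht : 2 ≤ t) (c : V → Fin t) (u v : V) (huv : c u ≠ c v) :
    ImprovingSwap (Utau G) c u v ↔
      ¬ G.Adj u v ∧ Utau G c u = Utau G c v ∧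
        (c u ∈ typesIn G c u ∧ c u ∉ typesIn G c v) ∧
        (c v ∈ typesIn G c v ∧ c v ∉ typesIn G c u) := by
  classical
  have hne : u ≠ v := fun h => huv (by rw [h])
  have hcu : swapColoring c u v u = c v := by simp [swapColoring]
  have hcv : swapColoring c u v v = c u := by simp [swapColoring, hne.symm]
  by_cases hadj : G.Adj u v
  · constructor
    · rintro ⟨h1, h2⟩
      exfalso
      have haB : c u ∈ typesIn G c v :=
        Finset.mem_image.2 ⟨u, (G.mem_neighborFinset v u).2 hadj.symm, rfl⟩
      have hbA : c v ∈ typesIn G c u :=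
        Finset.mem_image.2 ⟨v, (G.mem_neighborFinset u v).2 hadj, rfl⟩
      have hB' : typesIn G (swapColoring c u v) v ⊆ insert (c v) (typesIn G c v) := by
        intro x hx
        obtain ⟨w, hw, rfl⟩ := Finset.mem_image.1 hx
        by_cases hwu : w = u
        · subst hwu; rw [hcu]; exact Finset.mem_insert_self _ _
        · have hwv : w ≠ v := fun h => (G.notMem_neighborFinset_self v) (h ▸ hw)
          have : swapColoring c u v w = c w := by simp [swapColoring, hwu, hwv]
          rw [this]
          exact Finset.mem_insert_of_mem (Finset.mem_image_of_mem c hw)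
      have hA' : typesIn G (swapColoring c u v) u ⊆ insert (c u) (typesIn G c u) := by
        intro x hx
        obtain ⟨w, hw, rfl⟩ := Finset.mem_image.1 hx
        by_cases hwv : w = v
        · subst hwv; rw [hcv]; exact Finset.mem_insert_self _ _
        · have hwu : w ≠ u := fun h => (G.notMem_neighborFinset_self u) (h ▸ hw)
          have : swapColoring c u v w = c w := by simp [swapColoring, hwu, hwv]
          rw [this]
          exact Finset.mem_insert_of_mem (Finset.mem_image_of_mem c hw)
      have b1 : Utau G (swapColoring c u v) v ≤ Utau G c v := by
        unfold Utau
        rw [hcv]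
        calc ((typesIn G (swapColoring c u v) v).erase (c u)).card
            ≤ ((insert (c v) (typesIn G c v)).erase (c u)).card :=
              Finset.card_le_card (Finset.erase_subset_erase _ hB')
          _ ≤ ((typesIn G c v).erase (c v)).card := auxIns haB
      have b2 : Utau G (swapColoring c u v) u ≤ Utau G c u := by
        unfold Utau
        rw [hcu]
        calc ((typesIn G (swapColoring c u v) u).erase (c v)).card
            ≤ ((insert (c u) (typesIn G c u)).erase (c v)).card :=
              Finset.card_le_card (Finset.erase_subset_erase _ hA')
          _ ≤ ((typesIn G c u).erase (c u)).card := auxIns hbA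
      omega
    · rintro ⟨h, -⟩
      exact absurd hadj h
  · have hTv : typesIn G (swapColoring c u v) v = typesIn G c v := by
      refine Finset.image_congr ?_
      intro w hw
      simp only [Finset.coe_insert, Set.mem_insert_iff, Finset.mem_coe,
        SimpleGraph.mem_neighborFinset] at hw
      have hwu : w ≠ u := fun h => hadj (h ▸ hw).symm
      have hwv : w ≠ v := fun h => (G.irrefl) (h ▸ hw)
      simp [swapColoring, hwu, hwv]
    have hTu : typesIn G (swapColoring c u v) u = typesIn G c u := by
      refine Finset.image_congr ?_
      intro w hw
      simp only [Finset.mem_coe, SimpleGraph.mem_neighborFinset] at hw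
      have hwv : w ≠ v := fun h => hadj (h ▸ hw)
      have hwu : w ≠ u := fun h => (G.irrefl) (h ▸ hw)
      simp [swapColoring, hwu, hwv]
    unfold ImprovingSwap Utau
    rw [hTv, hTu, hcv, hcu]
    rw [keyArith (typesIn G c u) (typesIn G c v) (c u) (c v)]
    simp only [hadj, not_false_iff, true_and]
end

section
/- Let c be an equilibrium under the variety-seeking utility U_τ on a finite simple graph G, and let u, v be vertices with c(u) ≠ c(v) such that U_τ(c,u) = U_τ(c,v), c(u) ∈ T_c(u), and c(v) ∈ T_c(v). Then c(u) ∈ T_c(v) or c(v) ∈ T_c(u). -/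
open SimpleGraph Finset

theorem stmt5 {V : Type*} [Fintype V] [DecidableEq V] (G : SimpleGraph V) [DecidableRel G.Adj]
    {t : ℕ} (ht : 2 ≤ t) (c : V → Fin t) (heq : Equilibrium (Utau G) c)
    (u v : V) (huv : c u ≠ c v) (hutil : Utau G c u = Utau G c v)
    (hu : c u ∈ typesIn G c u) (hv : c v ∈ typesIn G c v) :
    c u ∈ typesIn G c v ∨ c v ∈ typesIn G c u := by
  by_contra h
  push_neg at h
  obtain ⟨hnv, hnu⟩ := h
  have hadj : ¬ G.Adj u v := fun hA =>
    hnu (Finset.mem_image.2 ⟨v, by simpa [SimpleGraph.mem_neighborFinset] using hA, rfl⟩)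
  have htv : typesIn G (swapColoring c u v) v = typesIn G c v := by
    apply Finset.image_congr
    intro w hw
    have hw' : G.Adj v w := by simpa using hw
    have hwu : w ≠ u := fun e => hadj (G.adj_symm (e ▸ hw'))
    have hwv : w ≠ v := fun e => G.irrefl (e ▸ hw')
    simp [swapColoring, hwu, hwv]
  have htu : typesIn G (swapColoring c u v) u = typesIn G c u := by
    apply Finset.image_congr
    intro w hw
    have hw' : G.Adj u w := by simpa using hw
    have hwu : w ≠ u := fun e => G.irrefl (e ▸ hw')
    have hwv : w ≠ v := fun e => hadj (e ▸ hw')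
    simp [swapColoring, hwu, hwv]
  have hcv : (swapColoring c u v) v = c u := by
    have hne : v ≠ u := fun e => huv (congrArg c e).symm
    simp [swapColoring, hne]
  have hcu : (swapColoring c u v) u = c v := by simp [swapColoring]
  have hUv : Utau G (swapColoring c u v) v = (typesIn G c v).card := by
    rw [Utau, htv, hcv, Finset.erase_eq_of_notMem hnv]
  have hUu : Utau G (swapColoring c u v) u = (typesIn G c u).card := by
    rw [Utau, htu, hcu, Finset.erase_eq_of_notMem hnu]
  have h1 : Utau G c u = (typesIn G c u).card - 1 := Finset.card_erase_of_mem hu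
  have h2 : Utau G c v = (typesIn G c v).card - 1 := Finset.card_erase_of_mem hv
  have hpu : 0 < (typesIn G c u).card := Finset.card_pos.2 ⟨_, hu⟩
  have hpv : 0 < (typesIn G c v).card := Finset.card_pos.2 ⟨_, hv⟩
  rw [h1, h2] at hutil
  apply heq u v huv
  exact ⟨by rw [hUv, h1]; omega, by rw [hUu, h2]; omega⟩
end

section
/- Let c be an equilibrium under the variety-seeking utility U_τ on a finite simple graph G with minimum degree δ, and fix r with 1 ≤ r ≤ δ − 1. Then the number of types i ∈ Fin t for which there exists a vertex v with c(v) = i having exactly r incident colorful edges is at most r² + 2r. -/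
open SimpleGraph Finset

set_option linter.unusedSectionVars false
section aux

variable {V : Type*} [Fintype V] [DecidableEq V] {G : SimpleGraph V} [DecidableRel G.Adj]
  {t : ℕ} {c : V → Fin t}

lemma typesIn_swap (u v x : V) (hu : u ∉ G.neighborFinset x) (hv : v ∉ G.neighborFinset x) :
    typesIn G (swapColoring c u v) x = typesIn G c x := by
  unfold typesIn
  apply Finset.image_congr
  intro w hw
  have h1 : w ≠ u := fun e => hu (e ▸ hw)
  have h2 : w ≠ v := fun e => hv (e ▸ hw)
  simp [swapColoring, h1, h2]

lemma mem_typesIn_self {v : V} {r : ℕ} (h : Usharp G c v = r) (hd : r + 1 ≤ G.degree v) :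
    c v ∈ typesIn G c v := by
  have hdeg : (G.neighborFinset v).card = G.degree v := G.card_neighborFinset_eq_degree v
  have hpart := Finset.card_filter_add_card_filter_not (s := G.neighborFinset v)
    (p := fun w => c w ≠ c v)
  unfold Usharp at h
  have : 0 < ((G.neighborFinset v).filter fun w => ¬ c w ≠ c v).card := by omega
  obtain ⟨w, hw⟩ := Finset.card_pos.mp this
  rw [Finset.mem_filter] at hw
  have : c w = c v := not_not.mp hw.2
  exact this ▸ Finset.mem_image_of_mem c hw.1

lemma one_le_utau {v : V} (h : 1 ≤ Usharp G c v) : 1 ≤ Utau G c v := by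
  unfold Usharp at h
  obtain ⟨w, hw⟩ := Finset.card_pos.mp h
  rw [Finset.mem_filter] at hw
  exact Finset.card_pos.mpr ⟨c w, Finset.mem_erase.mpr ⟨hw.2, Finset.mem_image_of_mem c hw.1⟩⟩

lemma utau_le_usharp (v : V) : Utau G c v ≤ Usharp G c v := by
  unfold Utau Usharp typesIn
  calc (((G.neighborFinset v).image c).erase (c v)).card
      ≤ (((G.neighborFinset v).filter fun w => c w ≠ c v).image c).card := by
        apply Finset.card_le_card
        intro x hx
        rw [Finset.mem_erase] at hx
        obtain ⟨hne, hx⟩ := hx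
        obtain ⟨w, hw, rfl⟩ := Finset.mem_image.mp hx
        exact Finset.mem_image_of_mem c (Finset.mem_filter.mpr ⟨hw, hne⟩)
    _ ≤ _ := Finset.card_image_le

lemma swap_block (heq : Equilibrium (Utau G) c) {u v : V} (hne : c u ≠ c v)
    (hu : c u ∈ typesIn G c u) (hv : c v ∈ typesIn G c v)
    (hk : Utau G c u = Utau G c v) :
    c u ∈ typesIn G c v ∨ c v ∈ typesIn G c u := by
  by_cases hadj : G.Adj u v
  · exact Or.inl (Finset.mem_image_of_mem c ((G.mem_neighborFinset v u).mpr hadj.symm))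
  by_contra hcon
  push_neg at hcon
  obtain ⟨h1, h2⟩ := hcon
  apply heq u v hne
  have huv : u ≠ v := fun e => hne (e ▸ rfl)
  have e1 : typesIn G (swapColoring c u v) v = typesIn G c v :=
    typesIn_swap u v v (fun h => hadj ((G.mem_neighborFinset v u).mp h).symm)
      (fun h => G.irrefl ((G.mem_neighborFinset v v).mp h))
  have e2 : typesIn G (swapColoring c u v) u = typesIn G c u :=
    typesIn_swap u v u (fun h => G.irrefl ((G.mem_neighborFinset u u).mp h))
      (fun h => hadj ((G.mem_neighborFinset u v).mp h))
  have sv : swapColoring c u v v = c u := by simp [swapColoring, Ne.symm huv]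
  have su : swapColoring c u v u = c v := by simp [swapColoring]
  have cv1 := Finset.card_erase_add_one hv
  have cu1 := Finset.card_erase_add_one hu
  constructor
  · show Utau G c u < Utau G (swapColoring c u v) v
    unfold Utau at hk ⊢
    rw [e1, sv, Finset.erase_eq_of_notMem h1]
    omega
  · show Utau G c v < Utau G (swapColoring c u v) u
    unfold Utau at hk ⊢
    rw [e2, su, Finset.erase_eq_of_notMem h2]
    omega

lemma count_aux {α : Type*} [DecidableEq α] (A : Finset α) (B : α → Finset α) (k : ℕ)
    (hB : ∀ i ∈ A, (B i).card ≤ k)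
    (hpair : ∀ i ∈ A, ∀ j ∈ A, i ≠ j → j ∈ B i ∨ i ∈ B j) :
    A.card ≤ 2 * k + 1 := by
  rcases Nat.eq_zero_or_pos A.card with h | h
  · omega
  have hsub : A.offDiag ⊆
      A.biUnion (fun i => (B i).image (fun j => (i, j))) ∪
      A.biUnion (fun i => (B i).image (fun j => (j, i))) := by
    intro p hp
    rw [Finset.mem_offDiag] at hp
    obtain ⟨h1, h2, h3⟩ := hp
    rcases hpair _ h1 _ h2 h3 with hb | hb
    · exact Finset.mem_union_left _
        (Finset.mem_biUnion.mpr ⟨p.1, h1, Finset.mem_image.mpr ⟨p.2, hb, rfl⟩⟩)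
    · exact Finset.mem_union_right _
        (Finset.mem_biUnion.mpr ⟨p.2, h2, Finset.mem_image.mpr ⟨p.1, hb, rfl⟩⟩)
  have key : A.card * A.card - A.card ≤ A.card * k + A.card * k := by
    calc A.card * A.card - A.card = A.offDiag.card := (Finset.offDiag_card A).symm
      _ ≤ _ := Finset.card_le_card hsub
      _ ≤ (A.biUnion fun i => (B i).image (fun j => (i, j))).card +
          (A.biUnion fun i => (B i).image (fun j => (j, i))).card := Finset.card_union_le _ _
      _ ≤ A.card * k + A.card * k := by
          gcongr <;>
          · refine le_trans Finset.card_biUnion_le ?_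
            calc ∑ i ∈ A, ((B i).image _).card ≤ ∑ _i ∈ A, k :=
                Finset.sum_le_sum (fun i hi => le_trans Finset.card_image_le (hB i hi))
              _ = A.card * k := by rw [Finset.sum_const, smul_eq_mul]
  have hmm : A.card * A.card ≤ A.card * (2 * k + 1) := by
    have : A.card * (2 * k + 1) = A.card * k + A.card * k + A.card := by ring
    omega
  exact Nat.le_of_mul_le_mul_left hmm h

end aux

section main
variable {V : Type*} [Fintype V] [DecidableEq V] {G : SimpleGraph V} [DecidableRel G.Adj]
  {t : ℕ} {c : V → Fin t}

lemma class_bound (heq : Equilibrium (Utau G) c) (r k : ℕ)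
    (hd : ∀ v : V, r + 1 ≤ G.degree v) :
    ((Finset.univ : Finset (Fin t)).filter fun i =>
      ∃ v, c v = i ∧ Usharp G c v = r ∧ Utau G c v = k).card ≤ 2 * k + 1 := by
  rcases isEmpty_or_nonempty V with hV | hV
  · have : ((Finset.univ : Finset (Fin t)).filter fun i =>
        ∃ v, c v = i ∧ Usharp G c v = r ∧ Utau G c v = k) = ∅ := by
      apply Finset.filter_eq_empty_iff.mpr
      rintro i - ⟨v, -⟩
      exact isEmptyElim v
    rw [this]; simp
  have : Inhabited V := Classical.inhabited_of_nonempty hV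
  set A := ((Finset.univ : Finset (Fin t)).filter fun i =>
      ∃ v, c v = i ∧ Usharp G c v = r ∧ Utau G c v = k) with hA
  have hex : ∀ i : Fin t, ∃ v : V,
      i ∈ A → (c v = i ∧ Usharp G c v = r ∧ Utau G c v = k) := by
    intro i
    by_cases hi : i ∈ A
    · obtain ⟨v, hv⟩ := (Finset.mem_filter.mp hi).2
      exact ⟨v, fun _ => hv⟩
    · exact ⟨default, fun h => absurd h hi⟩
  choose f hf using hex
  apply count_aux A (fun i => (typesIn G c (f i)).erase i) k
  · intro i hi
    obtain ⟨hc, hus, hut⟩ := hf i hi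
    unfold Utau at hut
    rw [hc] at hut
    exact hut.le
  · intro i hi j hj hij
    obtain ⟨hci, husi, huti⟩ := hf i hi
    obtain ⟨hcj, husj, hutj⟩ := hf j hj
    have hne : c (f i) ≠ c (f j) := by rw [hci, hcj]; exact hij
    have hmi : c (f i) ∈ typesIn G c (f i) := mem_typesIn_self husi (hd _)
    have hmj : c (f j) ∈ typesIn G c (f j) := mem_typesIn_self husj (hd _)
    rcases swap_block heq hne hmi hmj (by rw [huti, hutj]) with hb | hb
    · exact Or.inr (Finset.mem_erase.mpr ⟨hij, hci ▸ hb⟩)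
    · exact Or.inl (Finset.mem_erase.mpr ⟨hij.symm, hcj ▸ hb⟩)

lemma sum_odd (r : ℕ) : ∑ k ∈ Finset.Icc 1 r, (2 * k + 1) = r ^ 2 + 2 * r := by
  induction r with
  | zero => simp
  | succ n ih => rw [Finset.sum_Icc_succ_top (by omega : 1 ≤ n + 1), ih]; ring

theorem stmt7' {V : Type*} [Fintype V] [DecidableEq V] (G : SimpleGraph V) [DecidableRel G.Adj]
    {t : ℕ} (ht : 2 ≤ t) (c : V → Fin t) (heq : Equilibrium (Utau G) c)
    (r : ℕ) (hr1 : 1 ≤ r) (hr2 : r ≤ G.minDegree - 1) :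
    ((Finset.univ : Finset (Fin t)).filter fun i =>
        ∃ v : V, c v = i ∧ Usharp G c v = r).card ≤ r ^ 2 + 2 * r := by
  have hd : ∀ v : V, r + 1 ≤ G.degree v := by
    intro v
    have := G.minDegree_le_degree v
    omega
  have hsub : ((Finset.univ : Finset (Fin t)).filter fun i =>
        ∃ v : V, c v = i ∧ Usharp G c v = r) ⊆
      (Finset.Icc 1 r).biUnion (fun k => (Finset.univ : Finset (Fin t)).filter fun i =>
        ∃ v, c v = i ∧ Usharp G c v = r ∧ Utau G c v = k) := by
    intro i hi
    obtain ⟨-, v, hcv, hus⟩ := Finset.mem_filter.mp hi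
    refine Finset.mem_biUnion.mpr ⟨Utau G c v, Finset.mem_Icc.mpr ⟨?_, ?_⟩, ?_⟩
    · exact one_le_utau (by omega)
    · exact hus ▸ utau_le_usharp v
    · exact Finset.mem_filter.mpr ⟨Finset.mem_univ i, v, hcv, hus, rfl⟩
  calc _ ≤ _ := Finset.card_le_card hsub
    _ ≤ ∑ k ∈ Finset.Icc 1 r, ((Finset.univ : Finset (Fin t)).filter fun i =>
        ∃ v, c v = i ∧ Usharp G c v = r ∧ Utau G c v = k).card := Finset.card_biUnion_le
    _ ≤ ∑ k ∈ Finset.Icc 1 r, (2 * k + 1) :=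
        Finset.sum_le_sum (fun k _ => class_bound heq r k hd)
    _ = r ^ 2 + 2 * r := sum_odd r
end main

theorem stmt7 {V : Type*} [Fintype V] [DecidableEq V] (G : SimpleGraph V) [DecidableRel G.Adj]
    {t : ℕ} (ht : 2 ≤ t) (c : V → Fin t) (heq : Equilibrium (Utau G) c)
    (r : ℕ) (hr1 : 1 ≤ r) (hr2 : r ≤ G.minDegree - 1) :
    ((Finset.univ : Finset (Fin t)).filter fun i =>
        ∃ v : V, c v = i ∧ Usharp G c v = r).card ≤ r ^ 2 + 2 * r :=
  stmt7' G ht c heq r hr1 hr2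
end

section
/- Let G be a finite simple graph with minimum degree at least 1, let c be a coloring, and let c' be obtained from c by an improving swap under the binary utility U_b. Then the number of monochromatic edges of c' is at most the number of monochromatic edges of c minus 2. Consequently the swap game under U_b is a potential game with the number of monochromatic edges as potential. -/
open SimpleGraph Finset

theorem stmt8 {V : Type*} [Fintype V] [DecidableEq V] (G : SimpleGraph V) [DecidableRel G.Adj]
    {t : ℕ} (ht : 2 ≤ t) (hδ : 1 ≤ G.minDegree) (c : V → Fin t)
    (u v : V) (huv : c u ≠ c v) (himp : ImprovingSwap (Ub G) c u v) :
    monoCount G (swapColoring c u v) + 2 ≤ monoCount G c := by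
  classical
  set c' := swapColoring c u v with hc'
  have hu0 : ∀ w ∈ G.neighborFinset u, c w = c u := by
    by_contra h
    push_neg at h
    obtain ⟨w, hw, hcw⟩ := h
    have h1 : Ub G c u = 1 := by rw [Ub, if_pos ⟨w, hw, hcw⟩]
    have h2 : Ub G (swapColoring c u v) v ≤ 1 := by rw [Ub]; split <;> omega
    have := himp.1; omega
  have hv0 : ∀ w ∈ G.neighborFinset v, c w = c v := by
    by_contra h
    push_neg at h
    obtain ⟨w, hw, hcw⟩ := h
    have h1 : Ub G c v = 1 := by rw [Ub, if_pos ⟨w, hw, hcw⟩]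
    have h2 : Ub G (swapColoring c u v) u ≤ 1 := by rw [Ub]; split <;> omega
    have := himp.2; omega
  have hne : u ≠ v := fun h => huv (by rw [h])
  have hdu : 0 < G.degree u := lt_of_lt_of_le hδ (G.minDegree_le_degree u)
  have hdv : 0 < G.degree v := lt_of_lt_of_le hδ (G.minDegree_le_degree v)
  rw [SimpleGraph.degree] at hdu hdv
  obtain ⟨a, ha⟩ := Finset.card_pos.mp hdu
  obtain ⟨b, hb⟩ := Finset.card_pos.mp hdv
  have hca : c a = c u := hu0 a ha
  have hcb : c b = c v := hv0 b hb
  have hau : G.Adj u a := (SimpleGraph.mem_neighborFinset _ _ _).mp ha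
  have hbv : G.Adj v b := (SimpleGraph.mem_neighborFinset _ _ _).mp hb
  have hane : a ≠ u := fun h => G.loopless.irrefl u (h ▸ hau)
  have hanv : a ≠ v := fun h => huv ((hca.symm.trans (congrArg c h)))
  have hbnv : b ≠ v := fun h => G.loopless.irrefl v (h ▸ hbv)
  have hbnu : b ≠ u := fun h => huv ((hcb.symm.trans (congrArg c h))).symm
  have hc'u : c' u = c v := by simp [hc', swapColoring]
  have hc'v : c' v = c u := by simp [hc', swapColoring, hne.symm]
  have hc'w : ∀ w, w ≠ u → w ≠ v → c' w = c w := by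
    intro w h1 h2; simp [hc', swapColoring, h1, h2]
  have auxu : ∀ x y, G.Adj x y → x = u → c' x ≠ c' y := by
    intro x y hadj hx
    rw [hx] at hadj ⊢
    have hy : c y = c u := hu0 y ((SimpleGraph.mem_neighborFinset _ _ _).mpr hadj)
    have hyu : y ≠ u := fun h => G.loopless.irrefl u (h ▸ hadj)
    have hyv : y ≠ v := fun h => huv ((hy.symm.trans (congrArg c h)))
    rw [hc'u, hc'w y hyu hyv, hy]
    exact huv.symm
  have auxv : ∀ x y, G.Adj x y → x = v → c' x ≠ c' y := by
    intro x y hadj hx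
    rw [hx] at hadj ⊢
    have hy : c y = c v := hv0 y ((SimpleGraph.mem_neighborFinset _ _ _).mpr hadj)
    have hyv : y ≠ v := fun h => G.loopless.irrefl v (h ▸ hadj)
    have hyu : y ≠ u := fun h => huv ((hy.symm.trans (congrArg c h))).symm
    rw [hc'v, hc'w y hyu hyv, hy]
    exact huv
  have main : ∀ x y, G.Adj x y → c' x = c' y → c x = c y := by
    intro x y hadj heq
    by_cases hxu : x = u
    · exact absurd heq (auxu x y hadj hxu)
    by_cases hyu : y = u
    · exact absurd heq.symm (auxu y x hadj.symm hyu)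
    by_cases hxv : x = v
    · exact absurd heq (auxv x y hadj hxv)
    by_cases hyv : y = v
    · exact absurd heq.symm (auxv y x hadj.symm hyv)
    rwa [hc'w x hxu hxv, hc'w y hyu hyv] at heq
  set S : Finset (Sym2 V) := G.edgeFinset.filter fun e => (e.map c).IsDiag with hS
  set S' : Finset (Sym2 V) := G.edgeFinset.filter fun e => (e.map c').IsDiag with hS'
  have hmemS : ∀ x y, (s(x, y) ∈ S ↔ G.Adj x y ∧ c x = c y) := by
    intro x y
    simp [hS, SimpleGraph.mem_edgeFinset, Sym2.map_pair_eq, Sym2.mk_isDiag_iff]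
  have hmemS' : ∀ x y, (s(x, y) ∈ S' ↔ G.Adj x y ∧ c' x = c' y) := by
    intro x y
    simp [hS', SimpleGraph.mem_edgeFinset, Sym2.map_pair_eq, Sym2.mk_isDiag_iff]
  have heuS' : s(u, a) ∉ S' := by
    rw [hmemS']
    exact fun h => auxu u a hau rfl h.2
  have hevS' : s(v, b) ∉ S' := by
    rw [hmemS']
    exact fun h => auxv v b hbv rfl h.2
  have heuev : s(u, a) ≠ s(v, b) := by
    intro h
    rw [Sym2.eq_iff] at h
    rcases h with (⟨h1, h2⟩ | ⟨h1, h2⟩)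
    · exact hne h1
    · exact hanv h2
  have hsub : insert s(u, a) (insert s(v, b) S') ⊆ S := by
    intro e he
    rcases Finset.mem_insert.mp he with he | he
    · subst he; exact (hmemS u a).mpr ⟨hau, hca.symm⟩
    rcases Finset.mem_insert.mp he with he | he
    · subst he; exact (hmemS v b).mpr ⟨hbv, hcb.symm⟩
    · revert he
      refine Sym2.inductionOn e ?_
      intro x y he
      obtain ⟨hadj, heq⟩ := (hmemS' x y).mp he
      exact (hmemS x y).mpr ⟨hadj, main x y hadj heq⟩
  have hcard : S'.card + 2 ≤ S.card := by
    have h1 : s(u, a) ∉ insert s(v, b) S' := by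
      simp only [Finset.mem_insert]
      rintro (h | h)
      · exact heuev h
      · exact heuS' h
    calc S'.card + 2 = (insert s(u, a) (insert s(v, b) S')).card := by
          rw [Finset.card_insert_of_notMem h1, Finset.card_insert_of_notMem hevS']
      _ ≤ S.card := Finset.card_le_card hsub
  exact hcard
end

section
/- Let G be a finite simple graph, let c be a coloring, and let c' be obtained from c by an improving swap under the difference-seeking utility U_#. Then the number of monochromatic edges of c' is at most the number of monochromatic edges of c minus 2. Consequently the swap game under U_# is a potential game with the number of monochromatic edges as potential. -/
open SimpleGraph Finset

lemma card_mono_incident {V : Type*} [Fintype V] [DecidableEq V] (G : SimpleGraph V)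
    [DecidableRel G.Adj] {t : ℕ} (d : V → Fin t) (x : V) :
    (G.edgeFinset.filter fun e => (e.map d).IsDiag ∧ x ∈ e).card
      = ((G.neighborFinset x).filter fun w => d w = d x).card := by
  symm
  apply Finset.card_bij (fun w _ => s(x, w))
  · intro w hw
    simp only [Finset.mem_filter, SimpleGraph.mem_neighborFinset] at hw
    simp only [Finset.mem_filter, SimpleGraph.mem_edgeFinset, SimpleGraph.mem_edgeSet,
      Sym2.map_pair_eq, Sym2.mk_isDiag_iff, Sym2.mem_iff]
    exact ⟨hw.1, hw.2.symm, by simp⟩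
  · intro w1 h1 w2 h2 h
    exact Sym2.congr_right.mp h
  · intro e he
    simp only [Finset.mem_filter, SimpleGraph.mem_edgeFinset, SimpleGraph.mem_edgeSet] at he
    induction e using Sym2.ind with
    | _ p q =>
      obtain ⟨hadj, hdiag, hmem⟩ := he
      rw [Sym2.map_pair_eq, Sym2.mk_isDiag_iff] at hdiag
      rw [SimpleGraph.mem_edgeSet] at hadj
      rw [Sym2.mem_iff] at hmem
      rcases hmem with rfl | rfl
      · exact ⟨q, Finset.mem_filter.mpr ⟨by rw [SimpleGraph.mem_neighborFinset]; exact hadj, hdiag.symm⟩, rfl⟩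
      · exact ⟨p, Finset.mem_filter.mpr ⟨by rw [SimpleGraph.mem_neighborFinset]; exact hadj.symm, hdiag⟩,
          Sym2.eq_swap⟩

lemma mono_split {V : Type*} [Fintype V] [DecidableEq V] (G : SimpleGraph V)
    [DecidableRel G.Adj] {t : ℕ} (d : V → Fin t) (u v : V) :
    monoCount G d
      = (G.edgeFinset.filter fun e => (e.map d).IsDiag ∧ u ∉ e ∧ v ∉ e).card
        + ((G.edgeFinset.filter fun e => (e.map d).IsDiag ∧ u ∈ e).card
          + (G.edgeFinset.filter fun e => (e.map d).IsDiag ∧ v ∈ e ∧ u ∉ e).card) := by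
  classical
  unfold monoCount
  set S := G.edgeFinset.filter fun e => (e.map d).IsDiag with hS
  have h1 := Finset.card_filter_add_card_filter_not (s := S) (p := fun e => u ∈ e)
  have h2 := Finset.card_filter_add_card_filter_not
    (s := S.filter fun e => ¬ u ∈ e) (p := fun e => v ∈ e)
  have e1 : S.filter (fun e => u ∈ e) = G.edgeFinset.filter fun e => (e.map d).IsDiag ∧ u ∈ e := by
    rw [hS, Finset.filter_filter]
  have e2 : (S.filter fun e => ¬ u ∈ e).filter (fun e => v ∈ e)
      = G.edgeFinset.filter fun e => (e.map d).IsDiag ∧ v ∈ e ∧ u ∉ e := by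
    rw [hS, Finset.filter_filter, Finset.filter_filter]
    all_goals exact Finset.filter_congr fun e _ => by tauto
  have e3 : (S.filter fun e => ¬ u ∈ e).filter (fun e => ¬ v ∈ e)
      = G.edgeFinset.filter fun e => (e.map d).IsDiag ∧ u ∉ e ∧ v ∉ e := by
    rw [hS, Finset.filter_filter, Finset.filter_filter]
    all_goals exact Finset.filter_congr fun e _ => by tauto
  rw [e1] at h1
  rw [e2, e3] at h2
  omega

lemma usharp_split {V : Type*} [Fintype V] [DecidableEq V] (G : SimpleGraph V)
    [DecidableRel G.Adj] {t : ℕ} (d : V → Fin t) (x : V) :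
    Usharp G d x + ((G.neighborFinset x).filter fun w => d w = d x).card
      = (G.neighborFinset x).card := by
  classical
  have h := Finset.card_filter_add_card_filter_not
    (s := G.neighborFinset x) (p := fun w => d w = d x)
  have : Usharp G d x = ((G.neighborFinset x).filter fun w => ¬ d w = d x).card := by
    unfold Usharp; rfl
  omega

theorem stmt9 {V : Type*} [Fintype V] [DecidableEq V] (G : SimpleGraph V) [DecidableRel G.Adj]
    {t : ℕ} (ht : 2 ≤ t) (c : V → Fin t)
    (u v : V) (huv : c u ≠ c v) (himp : ImprovingSwap (Usharp G) c u v) :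
    monoCount G (swapColoring c u v) + 2 ≤ monoCount G c := by
  classical
  set c' := swapColoring c u v with hc'
  have huvne : u ≠ v := fun h => huv (by rw [h])
  have hcu : c' u = c v := by simp [hc', swapColoring]
  have hcv : c' v = c u := by simp [hc', swapColoring, huvne.symm]
  have hcw : ∀ w, w ≠ u → w ≠ v → c' w = c w := by
    intro w h1 h2; simp [hc', swapColoring, h1, h2]
  -- the two improving inequalities
  obtain ⟨h1, h2⟩ := himp
  rw [← hc'] at h1 h2
  -- splits
  have hs1 := mono_split G c u v
  have hs2 := mono_split G c' u v
  -- the far parts coincide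
  have hfar : (G.edgeFinset.filter fun e => (e.map c').IsDiag ∧ u ∉ e ∧ v ∉ e)
      = G.edgeFinset.filter fun e => (e.map c).IsDiag ∧ u ∉ e ∧ v ∉ e := by
    apply Finset.filter_congr
    intro e _
    induction e using Sym2.ind with
    | _ p q =>
      simp only [Sym2.mem_iff, not_or]
      constructor
      · rintro ⟨hd, ⟨hpu, hqu⟩, hpv, hqv⟩
        rw [Sym2.map_pair_eq, hcw p (Ne.symm hpu) (Ne.symm hpv), hcw q (Ne.symm hqu) (Ne.symm hqv)] at hd
        exact ⟨hd, ⟨hpu, hqu⟩, hpv, hqv⟩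
      · rintro ⟨hd, ⟨hpu, hqu⟩, hpv, hqv⟩
        rw [Sym2.map_pair_eq]
        rw [Sym2.map_pair_eq] at hd
        rw [hcw p (Ne.symm hpu) (Ne.symm hpv), hcw q (Ne.symm hqu) (Ne.symm hqv)]
        exact ⟨hd, ⟨hpu, hqu⟩, hpv, hqv⟩
  -- mono edge containing both u and v is impossible (for any coloring d with d u ≠ d v)
  have hboth : ∀ (d : V → Fin t), d u ≠ d v →
      (G.edgeFinset.filter fun e => (e.map d).IsDiag ∧ v ∈ e ∧ u ∉ e)
        = G.edgeFinset.filter fun e => (e.map d).IsDiag ∧ v ∈ e := by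
    intro d hd
    apply Finset.filter_congr
    intro e he
    induction e using Sym2.ind with
    | _ p q =>
      rw [SimpleGraph.mem_edgeFinset, SimpleGraph.mem_edgeSet] at he
      have hne : u ≠ v := fun h => hd (congrArg d h)
      simp only [Sym2.map_pair_eq, Sym2.mk_isDiag_iff, Sym2.mem_iff]
      constructor
      · tauto
      · rintro ⟨hdiag, hv⟩
        refine ⟨hdiag, hv, ?_⟩
        rintro (rfl | rfl)
        · rcases hv with rfl | rfl
          · exact hne rfl
          · exact hd hdiag
        · rcases hv with rfl | rfl
          · exact hd hdiag.symm
          · exact hne rfl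
  have hdcuv : c' u ≠ c' v := by rw [hcu, hcv]; exact fun h => huv h.symm
  -- edge counts at u and at v
  have hau := card_mono_incident G c u
  have hau' := card_mono_incident G c' u
  have hav := card_mono_incident G c v
  have hav' := card_mono_incident G c' v
  have hbv : (G.edgeFinset.filter fun e => (e.map c).IsDiag ∧ v ∈ e ∧ u ∉ e).card
      = ((G.neighborFinset v).filter fun w => c w = c v).card := by
    rw [hboth c huv]; exact hav
  have hbv' : (G.edgeFinset.filter fun e => (e.map c').IsDiag ∧ v ∈ e ∧ u ∉ e).card
      = ((G.neighborFinset v).filter fun w => c' w = c' v).card := by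
    rw [hboth c' hdcuv]; exact hav'
  -- degree relations
  have hd1 := usharp_split G c u
  have hd2 := usharp_split G c v
  have hd3 := usharp_split G c' u
  have hd4 := usharp_split G c' v
  rw [hfar, hau', hbv'] at hs2
  rw [hau, hbv] at hs1
  omega
end

section
/- Let G be a finite simple graph, let c be a coloring, and let c' be obtained from c by an improving swap under the variety-seeking utility U_τ. Then the number of monochromatic edges of c' is at most the number of monochromatic edges of c minus 2. Consequently the swap game under U_τ is a potential game with the number of monochromatic edges as potential. -/
open SimpleGraph Finset

/-- Auxiliary: `|(insert b S) \ {a}|` is symmetric in `a` and `b` when `a ≠ b`. -/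
lemma cardL {t : ℕ} (S : Finset (Fin t)) (a b : Fin t) (hab : a ≠ b) :
    ((insert b S).erase a).card = ((insert a S).erase b).card := by
  have h1 : (insert b S).erase a = insert b ((S.erase a).erase b) := by
    ext x
    simp only [Finset.mem_erase, Finset.mem_insert]
    constructor
    · rintro ⟨hx, h | h⟩
      · exact Or.inl h
      · by_cases hb : x = b
        · exact Or.inl hb
        · exact Or.inr ⟨hb, hx, h⟩
    · rintro (h | ⟨hb, hx, h⟩)
      · exact ⟨h ▸ hab.symm, Or.inl h⟩
      · exact ⟨hx, Or.inr h⟩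
  have h2 : (insert a S).erase b = insert a ((S.erase b).erase a) := by
    ext x
    simp only [Finset.mem_erase, Finset.mem_insert]
    constructor
    · rintro ⟨hx, h | h⟩
      · exact Or.inl h
      · by_cases hb : x = a
        · exact Or.inl hb
        · exact Or.inr ⟨hb, hx, h⟩
    · rintro (h | ⟨hb, hx, h⟩)
      · exact ⟨h ▸ hab, Or.inl h⟩
      · exact ⟨hx, Or.inr h⟩
  rw [h1, h2, Finset.card_insert_of_notMem (Finset.notMem_erase _ _),
    Finset.card_insert_of_notMem (Finset.notMem_erase _ _), Finset.erase_right_comm]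

theorem stmt10 {V : Type*} [Fintype V] [DecidableEq V] (G : SimpleGraph V) [DecidableRel G.Adj]
    {t : ℕ} (ht : 2 ≤ t) (c : V → Fin t)
    (u v : V) (huv : c u ≠ c v) (himp : ImprovingSwap (Utau G) c u v) :
    monoCount G (swapColoring c u v) + 2 ≤ monoCount G c := by
  classical
  set c' := swapColoring c u v with hc'def
  have hune : u ≠ v := fun h => huv (by rw [h])
  have hc'u : c' u = c v := by simp [hc'def, swapColoring]
  have hc'v : c' v = c u := by simp [hc'def, swapColoring, hune.symm]
  have hc'w : ∀ w, w ≠ u → w ≠ v → c' w = c w := by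
    intro w h1 h2; simp [hc'def, swapColoring, h1, h2]
  obtain ⟨h1, h2⟩ := himp
  rw [show Utau G (swapColoring c u v) = Utau G c' from rfl] at h1 h2
  -- Step 1: u and v are not adjacent.
  have hadj : ¬ G.Adj u v := by
    intro hadj
    have hvNu : v ∈ G.neighborFinset u := by
      rw [SimpleGraph.mem_neighborFinset]; exact hadj
    have huNv : u ∈ G.neighborFinset v := by
      rw [SimpleGraph.mem_neighborFinset]; exact hadj.symm
    set A0 : Finset (Fin t) := ((G.neighborFinset u).erase v).image c with hA0
    set B0 : Finset (Fin t) := ((G.neighborFinset v).erase u).image c with hB0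
    have hTu : typesIn G c u = insert (c v) A0 := by
      rw [typesIn, ← Finset.insert_erase hvNu, Finset.image_insert]
    have hTv : typesIn G c v = insert (c u) B0 := by
      rw [typesIn, ← Finset.insert_erase huNv, Finset.image_insert]
    have hTv' : typesIn G c' v = insert (c v) B0 := by
      rw [typesIn, ← Finset.insert_erase huNv, Finset.image_insert, hc'u]
      congr 1
      apply Finset.image_congr
      intro w hw
      simp only [Finset.mem_coe, Finset.mem_erase, SimpleGraph.mem_neighborFinset] at hw
      exact hc'w w hw.1 (fun h => G.irrefl (h ▸ hw.2))
    have hTu' : typesIn G c' u = insert (c u) A0 := by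
      rw [typesIn, ← Finset.insert_erase hvNu, Finset.image_insert, hc'v]
      congr 1
      apply Finset.image_congr
      intro w hw
      simp only [Finset.mem_coe, Finset.mem_erase, SimpleGraph.mem_neighborFinset] at hw
      exact hc'w w (fun h => G.irrefl (h ▸ hw.2)) hw.1
    rw [Utau, Utau, hTu, hTv', hc'v] at h1
    rw [Utau, Utau, hTv, hTu', hc'u] at h2
    rw [cardL B0 _ _ huv.symm, cardL A0 _ _ huv.symm] at h2
    omega
  have hvNu : v ∉ G.neighborFinset u := by
    rw [SimpleGraph.mem_neighborFinset]; exact hadj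
  have huNv : u ∉ G.neighborFinset v := by
    rw [SimpleGraph.mem_neighborFinset]; exact fun h => hadj h.symm
  -- Step 2: rewrite the utilities.
  set A : Finset (Fin t) := typesIn G c u with hA
  set B : Finset (Fin t) := typesIn G c v with hB
  have hTu' : typesIn G c' u = A := by
    rw [hA, typesIn, typesIn]
    apply Finset.image_congr
    intro w hw
    simp only [Finset.mem_coe, SimpleGraph.mem_neighborFinset] at hw
    exact hc'w w (fun h => G.irrefl (h ▸ hw)) (fun h => hvNu (by
      rw [SimpleGraph.mem_neighborFinset]; exact h ▸ hw))
  have hTv' : typesIn G c' v = B := by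
    rw [hB, typesIn, typesIn]
    apply Finset.image_congr
    intro w hw
    simp only [Finset.mem_coe, SimpleGraph.mem_neighborFinset] at hw
    exact hc'w w (fun h => huNv (by
      rw [SimpleGraph.mem_neighborFinset]; exact h ▸ hw)) (fun h => G.irrefl (h ▸ hw))
  rw [Utau, Utau, hTv', hc'v] at h1
  rw [Utau, Utau, hTu', hc'u] at h2
  -- Step 3: memberships.
  have key : ∀ (S : Finset (Fin t)) (x : Fin t),
      (S.erase x).card + (if x ∈ S then 1 else 0) = S.card := by
    intro S x
    by_cases h : x ∈ S
    · rw [if_pos h]; exact Finset.card_erase_add_one h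
    · rw [if_neg h, Finset.erase_eq_of_notMem h, add_zero]
  simp only [← hA, ← hB] at h1 h2
  have k1 := key A (c u)
  have k2 := key A (c v)
  have k3 := key B (c u)
  have k4 := key B (c v)
  have hmem : c u ∈ A ∧ c v ∈ B ∧ c u ∉ B ∧ c v ∉ A := by
    by_cases haA : c u ∈ A <;> by_cases hbA : c v ∈ A <;>
      by_cases haB : c u ∈ B <;> by_cases hbB : c v ∈ B <;>
      simp only [haA, hbA, haB, hbB, if_true, if_false] at k1 k2 k3 k4 <;>
      first
        | exact ⟨haA, hbB, haB, hbA⟩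
        | (exfalso; omega)
  obtain ⟨haA, hbB, haB, hbA⟩ := hmem
  -- Step 4: extract the two destroyed monochromatic edges.
  obtain ⟨wa, hwaN, hwac⟩ : ∃ w ∈ G.neighborFinset u, c w = c u := by
    simpa [hA, typesIn, Finset.mem_image] using haA
  obtain ⟨wb, hwbN, hwbc⟩ : ∃ w ∈ G.neighborFinset v, c w = c v := by
    simpa [hB, typesIn, Finset.mem_image] using hbB
  have hwaAdj : G.Adj u wa := by rwa [SimpleGraph.mem_neighborFinset] at hwaN
  have hwbAdj : G.Adj v wb := by rwa [SimpleGraph.mem_neighborFinset] at hwbN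
  have hwau : wa ≠ u := fun h => G.irrefl (h ▸ hwaAdj)
  have hwav : wa ≠ v := fun h => huv (by rw [← hwac, h])
  have hwbv : wb ≠ v := fun h => G.irrefl (h ▸ hwbAdj)
  have hwbu : wb ≠ u := fun h => huv (by rw [← hwbc, h])
  set e1 : Sym2 V := s(u, wa) with he1
  set e2 : Sym2 V := s(v, wb) with he2
  set S' : Finset (Sym2 V) := G.edgeFinset.filter (fun e => (e.map c').IsDiag) with hS'
  set S : Finset (Sym2 V) := G.edgeFinset.filter (fun e => (e.map c).IsDiag) with hS
  have hsub : S' ⊆ S := by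
    intro e he
    rw [hS', Finset.mem_filter] at he
    rw [hS, Finset.mem_filter]
    refine ⟨he.1, ?_⟩
    obtain ⟨heE, hd⟩ := he
    revert heE hd
    refine Sym2.ind (fun x y hxyE hd => ?_) e
    rw [SimpleGraph.mem_edgeFinset, SimpleGraph.mem_edgeSet] at hxyE
    rw [Sym2.map_pair_eq, Sym2.mk_isDiag_iff] at hd ⊢
    by_cases hxu : x = u
    · subst hxu
      have hyx : y ≠ x := fun h => G.irrefl (h ▸ hxyE)
      have hyv : y ≠ v := fun h => hadj (h ▸ hxyE)
      rw [hc'u, hc'w y hyx hyv] at hd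
      exact absurd (by
        rw [hA, typesIn, Finset.mem_image]
        exact ⟨y, by rw [SimpleGraph.mem_neighborFinset]; exact hxyE, hd.symm⟩) hbA
    by_cases hxv : x = v
    · subst hxv
      have hyx : y ≠ x := fun h => G.irrefl (h ▸ hxyE)
      have hyu : y ≠ u := fun h => hadj (h ▸ hxyE).symm
      rw [hc'v, hc'w y hyu hyx] at hd
      exact absurd (by
        rw [hB, typesIn, Finset.mem_image]
        exact ⟨y, by rw [SimpleGraph.mem_neighborFinset]; exact hxyE, hd.symm⟩) haB
    by_cases hyu : y = u
    · subst hyu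
      have hxv' : x ≠ v := fun h => hadj (h ▸ hxyE).symm
      rw [hc'u, hc'w x hxu hxv'] at hd
      exact absurd (by
        rw [hA, typesIn, Finset.mem_image]
        exact ⟨x, by rw [SimpleGraph.mem_neighborFinset]; exact hxyE.symm, hd⟩) hbA
    by_cases hyv : y = v
    · subst hyv
      have hxu' : x ≠ u := hxu
      rw [hc'v, hc'w x hxu hxv] at hd
      exact absurd (by
        rw [hB, typesIn, Finset.mem_image]
        exact ⟨x, by rw [SimpleGraph.mem_neighborFinset]; exact hxyE.symm, hd⟩) haB
    · rw [hc'w x hxu hxv, hc'w y hyu hyv] at hd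
      exact hd
  have he1S : e1 ∈ S := by
    rw [hS, Finset.mem_filter, he1]
    refine ⟨by rw [SimpleGraph.mem_edgeFinset, SimpleGraph.mem_edgeSet]; exact hwaAdj, ?_⟩
    rw [Sym2.map_pair_eq, Sym2.mk_isDiag_iff, hwac]
  have he2S : e2 ∈ S := by
    rw [hS, Finset.mem_filter, he2]
    refine ⟨by rw [SimpleGraph.mem_edgeFinset, SimpleGraph.mem_edgeSet]; exact hwbAdj, ?_⟩
    rw [Sym2.map_pair_eq, Sym2.mk_isDiag_iff, hwbc]
  have he1S' : e1 ∉ S' := by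
    rw [hS', Finset.mem_filter, he1]
    rintro ⟨-, hd⟩
    rw [Sym2.map_pair_eq, Sym2.mk_isDiag_iff, hc'u, hc'w wa hwau hwav, hwac] at hd
    exact huv hd.symm
  have he2S' : e2 ∉ S' := by
    rw [hS', Finset.mem_filter, he2]
    rintro ⟨-, hd⟩
    rw [Sym2.map_pair_eq, Sym2.mk_isDiag_iff, hc'v, hc'w wb hwbu hwbv, hwbc] at hd
    exact huv hd
  have hne : e1 ≠ e2 := by
    rw [he1, he2]
    intro hh
    rw [Sym2.eq_iff] at hh
    rcases hh with ⟨h, -⟩ | ⟨h, -⟩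
    · exact hune h
    · exact hadj (by rw [← h] at hwbAdj; exact hwbAdj.symm)
  have hins : insert e1 (insert e2 S') ⊆ S := by
    intro e he
    rw [Finset.mem_insert, Finset.mem_insert] at he
    rcases he with h | h | h
    · exact h ▸ he1S
    · exact h ▸ he2S
    · exact hsub h
  have hcard : (insert e1 (insert e2 S')).card = S'.card + 2 := by
    rw [Finset.card_insert_of_notMem (by
      rw [Finset.mem_insert]; rintro (h | h); exact hne h; exact he1S' h),
      Finset.card_insert_of_notMem he2S']
  have := Finset.card_le_card hins
  rw [hcard] at this
  exact this
end

section
/- Let G be a finite simple graph with minimum degree at least 1, and let c be a coloring that is an equilibrium under any one of the utilities U_b, U_#, or U_τ. If u and v are two vertices whose agents are both segregated, then c(u) = c(v); that is, at most one type has segregated agents at equilibrium. -/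
open SimpleGraph Finset

lemma key_lemma {V : Type*} [Fintype V] [DecidableEq V] (G : SimpleGraph V) [DecidableRel G.Adj]
    {t : ℕ} (hδ : 1 ≤ G.minDegree)
    (U : (V → Fin t) → V → ℕ) (hU : U = Ub G ∨ U = Usharp G ∨ U = Utau G)
    (c : V → Fin t) (x y : V) (hne : c x ≠ c y)
    (hx : ∀ w ∈ G.neighborFinset x, c w = c x)
    (hy : ∀ w ∈ G.neighborFinset y, c w = c y) :
    U c x < U (swapColoring c x y) y := by
  have hadj : ¬ G.Adj x y := fun h => hne (hy x (by simpa [SimpleGraph.mem_neighborFinset] using h.symm))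
  have hny : (G.neighborFinset y).Nonempty := by
    rw [← Finset.card_pos, SimpleGraph.card_neighborFinset_eq_degree]
    exact lt_of_lt_of_le hδ (G.minDegree_le_degree y)
  -- values of swapped coloring
  have hcy : swapColoring c x y y = c x := by
    unfold swapColoring
    by_cases h : y = x
    · simp [h]
    · simp [h]
  have hw : ∀ w ∈ G.neighborFinset y, swapColoring c x y w = c y := by
    intro w hwmem
    have hwy : w ≠ y := G.ne_of_adj ((SimpleGraph.mem_neighborFinset _ _ _).mp hwmem).symm
    have hwx : w ≠ x := by
      rintro rfl
      exact hadj (((SimpleGraph.mem_neighborFinset _ _ _).mp hwmem)).symm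
    unfold swapColoring
    simp [hwx, hwy, hy w hwmem]
  -- U c x = 0
  have hzero : U c x = 0 := by
    rcases hU with rfl | rfl | rfl
    · simp only [Ub, ite_eq_right_iff]
      intro ⟨w, hwm, hwne⟩
      exact absurd (hx w hwm) hwne
    · simp only [Usharp, Finset.card_eq_zero, Finset.filter_eq_empty_iff]
      intro w hwm
      simpa using hx w hwm
    · simp only [Utau, Finset.card_eq_zero]
      rw [Finset.erase_eq_empty_iff]
      rcases Finset.eq_empty_or_nonempty (typesIn G c x) with h | h
      · left; exact h
      · right
        apply Finset.eq_singleton_iff_nonempty_unique_mem.mpr ⟨h, ?_⟩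
        intro a ha
        obtain ⟨w, hwm, rfl⟩ := Finset.mem_image.mp ha
        exact hx w hwm
  -- U c' y ≥ 1
  have hpos : 1 ≤ U (swapColoring c x y) y := by
    obtain ⟨w, hwm⟩ := hny
    have hwc : swapColoring c x y w ≠ swapColoring c x y y := by
      rw [hw w hwm, hcy]; exact fun h => hne h.symm
    rcases hU with rfl | rfl | rfl
    · simp only [Ub]
      rw [if_pos ⟨w, hwm, hwc⟩]
    · exact Finset.card_pos.mpr ⟨w, Finset.mem_filter.mpr ⟨hwm, hwc⟩⟩
    · simp only [Utau, Nat.succ_le_iff, Finset.card_pos]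
      refine ⟨swapColoring c x y w, Finset.mem_erase.mpr ⟨hwc, ?_⟩⟩
      exact Finset.mem_image.mpr ⟨w, hwm, rfl⟩
  omega

theorem stmt11 {V : Type*} [Fintype V] [DecidableEq V] (G : SimpleGraph V) [DecidableRel G.Adj]
    {t : ℕ} (ht : 2 ≤ t) (hδ : 1 ≤ G.minDegree)
    (U : (V → Fin t) → V → ℕ) (hU : U = Ub G ∨ U = Usharp G ∨ U = Utau G)
    (c : V → Fin t) (heq : Equilibrium U c) (u v : V)
    (hu : ∀ w ∈ G.neighborFinset u, c w = c u)
    (hv : ∀ w ∈ G.neighborFinset v, c w = c v) :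
    c u = c v := by
  by_contra hne
  refine heq u v hne ⟨key_lemma G hδ U hU c u v hne hu hv, ?_⟩
  rw [swapColoring_comm]
  exact key_lemma G hδ U hU c v u (Ne.symm hne) hv hu
end

section
/- Let G be a finite simple graph with minimum degree δ, let t ≥ 2, and let c : V → Fin t be a coloring in which every color class has size at least k. If c is an equilibrium under the difference-seeking utility U_#, then the social welfare satisfies 2·sw(c, U_#) ≥ t·k·δ. -/
open SimpleGraph Finset

lemma swap_ge {V : Type*} [Fintype V] [DecidableEq V] (G : SimpleGraph V) [DecidableRel G.Adj]
    {t : ℕ} (c : V → Fin t) {u v : V} (h : c u ≠ c v) :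
    G.degree v - Usharp G c v ≤ Usharp G (swapColoring c u v) v := by
  have huv : v ≠ u := fun e => h (by rw [e])
  have hcv : swapColoring c u v v = c u := by simp [swapColoring, huv]
  have hsub : (G.neighborFinset v).filter (fun w => ¬ c w ≠ c v)
      ⊆ (G.neighborFinset v).filter
        (fun w => swapColoring c u v w ≠ swapColoring c u v v) := by
    intro w hw
    simp only [Finset.mem_filter, not_not] at hw ⊢
    refine ⟨hw.1, ?_⟩
    have hwv : w ≠ v := (G.adj_symm ((SimpleGraph.mem_neighborFinset _ _ _).1 hw.1)).ne
    have hwu : w ≠ u := fun e => h (by rw [← e, hw.2])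
    rw [hcv]
    simp only [swapColoring, if_neg hwu, if_neg hwv]
    rw [hw.2]
    exact h.symm
  have hcard := Finset.card_le_card hsub
  have hpart := Finset.card_filter_add_card_filter_not
    (s := G.neighborFinset v) (p := fun w => c w ≠ c v)
  have hdeg : (G.neighborFinset v).card = G.degree v := G.card_neighborFinset_eq_degree v
  unfold Usharp
  omega

lemma eq_pair_bound {V : Type*} [Fintype V] [DecidableEq V] (G : SimpleGraph V)
    [DecidableRel G.Adj] {t : ℕ} {c : V → Fin t} (heq : Equilibrium (Usharp G) c)
    {u v : V} (h : c u ≠ c v) :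
    G.minDegree ≤ Usharp G c u + Usharp G c v := by
  haveI : Nonempty V := ⟨u⟩
  have hni := heq u v h
  unfold ImprovingSwap at hni
  rw [not_and_or, not_lt, not_lt] at hni
  have h1 := swap_ge G c h
  have h2 : G.degree u - Usharp G c u ≤ Usharp G (swapColoring c u v) u := by
    rw [swapColoring_comm]
    exact swap_ge G c h.symm
  have d1 := G.minDegree_le_degree u
  have d2 := G.minDegree_le_degree v
  omega

theorem stmt12 {V : Type*} [Fintype V] [DecidableEq V] (G : SimpleGraph V) [DecidableRel G.Adj]
    {t k : ℕ} (ht : 2 ≤ t) (c : V → Fin t)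
    (hsize : ∀ i : Fin t, k ≤ ((Finset.univ : Finset V).filter fun v => c v = i).card)
    (heq : Equilibrium (Usharp G) c) :
    t * k * G.minDegree ≤ 2 * ∑ v, Usharp G c v := by
  -- trivial case k = 0
  rcases Nat.eq_zero_or_pos k with hk0 | hk
  · simp [hk0]
  -- V is nonempty
  have ht0 : 0 < t := by omega
  have hne : (Finset.univ : Finset V).Nonempty := by
    have := hsize ⟨0, ht0⟩
    rcases Finset.card_pos.1 (lt_of_lt_of_le hk this) with ⟨v, hv⟩
    exact ⟨v, Finset.mem_univ v⟩
  obtain ⟨v₀, -, hmin⟩ := Finset.exists_min_image Finset.univ (Usharp G c) hne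
  set m := Usharp G c v₀ with hm
  set δ := G.minDegree with hδ
  have hfib : ∑ i : Fin t, ∑ v ∈ Finset.univ.filter (fun v => c v = i), (2 * Usharp G c v)
      = ∑ v, 2 * Usharp G c v :=
    Finset.sum_fiberwise Finset.univ c _
  have hsum2 : 2 * ∑ v, Usharp G c v = ∑ v, 2 * Usharp G c v := by
    rw [Finset.mul_sum]
  by_cases hcase : δ ≤ 2 * m
  · -- every vertex has 2 * Usharp ≥ δ
    have hcardV : t * k ≤ Fintype.card V := by
      have h1 : ∑ i : Fin t, k ≤ ∑ i : Fin t, ((Finset.univ : Finset V).filter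
          fun v => c v = i).card := Finset.sum_le_sum fun i _ => hsize i
      have hc := Finset.sum_card_fiberwise_eq_card_filter (Finset.univ : Finset V)
        (Finset.univ : Finset (Fin t)) c
      simp only [Finset.mem_univ, Finset.filter_true, Finset.card_univ] at hc
      have h2 : ∑ i : Fin t, k = t * k := by
        simp [Finset.sum_const, Finset.card_univ, mul_comm]
      rw [← h2]
      exact h1.trans hc.le
    have hlb : ∀ v ∈ (Finset.univ : Finset V), δ ≤ 2 * Usharp G c v := fun v _ =>
      le_trans hcase (by have := hmin v (Finset.mem_univ v); omega)
    have := Finset.card_nsmul_le_sum Finset.univ (fun v => 2 * Usharp G c v) δ hlb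
    rw [hsum2]
    calc t * k * δ ≤ Fintype.card V * δ := Nat.mul_le_mul_right δ hcardV
      _ ≤ ∑ v, 2 * Usharp G c v := by simpa [Finset.card_univ, smul_eq_mul] using this
  · push_neg at hcase
    have hmδ : m ≤ δ := by omega
    -- per-class bounds
    have hclass : ∀ i : Fin t, i ≠ c v₀ →
        k * (2 * (δ - m)) ≤ ∑ v ∈ Finset.univ.filter (fun v => c v = i), 2 * Usharp G c v := by
      intro i hi
      have hlb : ∀ v ∈ Finset.univ.filter (fun v => c v = i),
          2 * (δ - m) ≤ 2 * Usharp G c v := by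
        intro v hv
        have hvi : c v = i := (Finset.mem_filter.1 hv).2
        have hneq : c v ≠ c v₀ := by rw [hvi]; exact hi
        have := eq_pair_bound G heq hneq
        omega
      have h1 := Finset.card_nsmul_le_sum _ _ _ hlb
      have h2 := hsize i
      calc k * (2 * (δ - m)) ≤ (Finset.univ.filter (fun v => c v = i)).card * (2 * (δ - m)) :=
            Nat.mul_le_mul_right _ h2
        _ ≤ _ := by simpa [smul_eq_mul] using h1
    have hclass0 : k * (2 * m) ≤ ∑ v ∈ Finset.univ.filter (fun v => c v = c v₀),
        2 * Usharp G c v := by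
      have hlb : ∀ v ∈ Finset.univ.filter (fun v => c v = c v₀),
          2 * m ≤ 2 * Usharp G c v := by
        intro v _
        have := hmin v (Finset.mem_univ v)
        omega
      have h1 := Finset.card_nsmul_le_sum _ _ _ hlb
      have h2 := hsize (c v₀)
      calc k * (2 * m) ≤ (Finset.univ.filter (fun v => c v = c v₀)).card * (2 * m) :=
            Nat.mul_le_mul_right _ h2
        _ ≤ _ := by simpa [smul_eq_mul] using h1
    -- split the fiberwise sum
    have hsplit : ∑ i : Fin t, ∑ v ∈ Finset.univ.filter (fun v => c v = i), (2 * Usharp G c v)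
        = (∑ v ∈ Finset.univ.filter (fun v => c v = c v₀), 2 * Usharp G c v)
          + ∑ i ∈ Finset.univ.erase (c v₀),
              ∑ v ∈ Finset.univ.filter (fun v => c v = i), 2 * Usharp G c v :=
      (Finset.add_sum_erase _ _ (Finset.mem_univ _)).symm
    have herase : (t - 1) * (k * (2 * (δ - m)))
        ≤ ∑ i ∈ Finset.univ.erase (c v₀),
            ∑ v ∈ Finset.univ.filter (fun v => c v = i), 2 * Usharp G c v := by
      have h1 : ∀ i ∈ Finset.univ.erase (c v₀), k * (2 * (δ - m))
          ≤ ∑ v ∈ Finset.univ.filter (fun v => c v = i), 2 * Usharp G c v := fun i hi =>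
        hclass i (Finset.ne_of_mem_erase hi)
      have h2 := Finset.card_nsmul_le_sum _ _ _ h1
      have hcard : (Finset.univ.erase (c v₀)).card = t - 1 := by
        rw [Finset.card_erase_of_mem (Finset.mem_univ _)]
        simp
      simpa [hcard, smul_eq_mul] using h2
    rw [hsum2, ← hfib, hsplit]
    have harith : t * k * δ ≤ k * (2 * m) + (t - 1) * (k * (2 * (δ - m))) := by
      obtain ⟨s, rfl⟩ : ∃ s, t = s + 2 := ⟨t - 2, by omega⟩
      obtain ⟨d, hd⟩ : ∃ d, δ = m + d := ⟨δ - m, by omega⟩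
      have hmd : m ≤ d := by omega
      have hsub : δ - m = d := by omega
      rw [hsub, hd]
      have hs1 : s + 2 - 1 = s + 1 := rfl
      rw [hs1]
      nlinarith [Nat.mul_le_mul_left (k * s) hmd]
    omega
end

section
/- Let C_{2k} be the cycle on 2k vertices (k ≥ 3) and let c be a coloring with 2 types where each color class has size exactly k. If c is an equilibrium under the difference-seeking utility U_#, then 3·sw(c, U_#) ≥ 8k. -/
open SimpleGraph Finset

section Helpers

variable {n : ℕ}

lemma fin2_eq_of_ne {a b x : Fin 2} (ha : a ≠ x) (hb : b ≠ x) : a = b := by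
  revert a b x; decide

lemma neighborFinset_cycle [NeZero n] (h1 : (1 : ZMod n) ≠ 0) (v : ZMod n) :
    (cycleZMod n).neighborFinset v = {v + 1, v - 1} := by
  ext w
  rw [SimpleGraph.mem_neighborFinset]
  simp only [SimpleGraph.mem_neighborFinset, cycleZMod, SimpleGraph.circulantGraph_adj,
    Set.mem_singleton_iff, Finset.mem_insert, Finset.mem_singleton]
  constructor
  · rintro ⟨hne, h | h⟩
    · right; linear_combination -h
    · left; linear_combination h
  · rintro (rfl | rfl)
    · exact ⟨fun h => h1 (by linear_combination -h), Or.inr (by ring)⟩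
    · exact ⟨fun h => h1 (by linear_combination h), Or.inl (by ring)⟩

lemma usharp_eq [NeZero n] (h1 : (1 : ZMod n) ≠ 0) (h2 : (2 : ZMod n) ≠ 0)
    (c : ZMod n → Fin 2) (v : ZMod n) :
    Usharp (cycleZMod n) c v
      = (if c (v + 1) ≠ c v then 1 else 0) + (if c (v - 1) ≠ c v then 1 else 0) := by
  have hne : v + 1 ≠ v - 1 := fun h => h2 (by linear_combination h)
  rw [Usharp, neighborFinset_cycle h1]
  rw [Finset.filter_insert, Finset.filter_singleton]
  by_cases hp : c (v + 1) ≠ c v <;> by_cases hq : c (v - 1) ≠ c v <;>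
    simp [hp, hq, Finset.card_insert_of_notMem, hne]

lemma sum_usharp [NeZero n] (h1 : (1 : ZMod n) ≠ 0) (h2 : (2 : ZMod n) ≠ 0)
    (c : ZMod n → Fin 2) :
    ∑ v, Usharp (cycleZMod n) c v
      = 2 * ((Finset.univ : Finset (ZMod n)).filter fun v => c (v + 1) ≠ c v).card := by
  calc ∑ v, Usharp (cycleZMod n) c v
      = ∑ v : ZMod n, ((if c (v + 1) ≠ c v then 1 else 0) + (if c (v - 1) ≠ c v then 1 else 0)) := by
        exact Finset.sum_congr rfl fun v _ => usharp_eq h1 h2 c v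
    _ = (∑ v : ZMod n, (if c (v + 1) ≠ c v then 1 else 0))
        + ∑ v : ZMod n, (if c (v - 1) ≠ c v then 1 else 0) := Finset.sum_add_distrib
    _ = (∑ v : ZMod n, (if c (v + 1) ≠ c v then 1 else 0))
        + ∑ v : ZMod n, (if c (v + 1) ≠ c v then 1 else 0) := by
        congr 1
        apply Fintype.sum_equiv (Equiv.subRight (1 : ZMod n))
        intro v
        simp only [Equiv.subRight_apply]
        have hc : c (v - 1 + 1) = c v := by rw [show v - 1 + 1 = v from by ring]
        simp only [hc]
        by_cases h : c (v - 1) = c v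
        · simp [h]
        · simp [h, Ne.symm h]
    _ = 2 * ((Finset.univ : Finset (ZMod n)).filter fun v => c (v + 1) ≠ c v).card := by
        rw [Finset.card_filter]; ring

end Helpers

section SwapHelpers

lemma swap_self1 {V : Type*} [DecidableEq V] {t : ℕ} (c : V → Fin t) (u v : V) :
    swapColoring c u v u = c v := by simp [swapColoring]

lemma swap_self2 {V : Type*} [DecidableEq V] {t : ℕ} (c : V → Fin t) {u v : V} (h : v ≠ u) :
    swapColoring c u v v = c u := by simp [swapColoring, h]

lemma swap_other {V : Type*} [DecidableEq V] {t : ℕ} (c : V → Fin t) {u v w : V}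
    (hu : w ≠ u) (hv : w ≠ v) : swapColoring c u v w = c w := by simp [swapColoring, hu, hv]

end SwapHelpers

theorem stmt13 (k : ℕ) (hk : 3 ≤ k) [NeZero (2 * k)] (c : ZMod (2 * k) → Fin 2)
    (hsize : ∀ i : Fin 2, ((Finset.univ : Finset (ZMod (2 * k))).filter fun v => c v = i).card = k)
    (heq : Equilibrium (Usharp (cycleZMod (2 * k))) c) :
    8 * k ≤ 3 * ∑ v, Usharp (cycleZMod (2 * k)) c v := by
  have hdvd : ∀ m : ℕ, 0 < m → m < 2 * k → ((m : ZMod (2 * k)) ≠ 0) := by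
    intro m hm hm2 h
    rw [ZMod.natCast_eq_zero_iff] at h
    exact absurd (Nat.le_of_dvd hm h) (by omega)
  have h1 : (1 : ZMod (2 * k)) ≠ 0 := by
    have := hdvd 1 (by norm_num) (by omega); exact_mod_cast this
  have h2 : (2 : ZMod (2 * k)) ≠ 0 := by
    have := hdvd 2 (by norm_num) (by omega); exact_mod_cast this
  have hcard : Fintype.card (ZMod (2 * k)) = 2 * k := ZMod.card _
  rw [sum_usharp h1 h2 c]
  set D := (Finset.univ : Finset (ZMod (2 * k))).filter (fun v => c (v + 1) ≠ c v) with hD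
  suffices hkey : 4 * k ≤ 3 * D.card by omega
  have hUle : ∀ v : ZMod (2 * k), Usharp (cycleZMod (2 * k)) c v ≤ 2 := by
    intro v; rw [usharp_eq h1 h2]; split <;> split <;> omega
  -- no "aabb" pattern at equilibrium
  have haabb : ∀ i : ZMod (2 * k),
      ¬ (c (i + 1) = c i ∧ c (i + 2) ≠ c (i + 1) ∧ c (i + 3) = c (i + 2)) := by
    rintro i ⟨ha, hb, hc3⟩
    apply heq (i + 1) (i + 2) (Ne.symm hb)
    have e1 : i + 1 + 1 = i + 2 := by ring
    have e2 : i + 1 - 1 = i := by ring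
    have e3 : i + 2 + 1 = i + 3 := by ring
    have e4 : i + 2 - 1 = i + 1 := by ring
    have n31 : i + 3 ≠ i + 1 := fun h => h2 (by linear_combination h)
    have n32 : i + 3 ≠ i + 2 := fun h => h1 (by linear_combination h)
    have n21 : i + 2 ≠ i + 1 := fun h => h1 (by linear_combination h)
    have n01 : i ≠ i + 1 := fun h => h1 (by linear_combination -h)
    have n02 : i ≠ i + 2 := fun h => h2 (by linear_combination -h)
    have s1 : swapColoring c (i + 1) (i + 2) (i + 3) = c (i + 3) := swap_other c n31 n32
    have s2 : swapColoring c (i + 1) (i + 2) (i + 2) = c (i + 1) := swap_self2 c n21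
    have s3 : swapColoring c (i + 1) (i + 2) (i + 1) = c (i + 2) := swap_self1 c (i + 1) (i + 2)
    have s4 : swapColoring c (i + 1) (i + 2) i = c i := swap_other c n01 n02
    constructor
    · rw [usharp_eq h1 h2, usharp_eq h1 h2]
      simp only [e1, e2, e3, e4, s1, s2, s3, s4]
      simp [hc3, hb, ha.symm, Ne.symm hb]
    · rw [usharp_eq h1 h2, usharp_eq h1 h2]
      simp only [e1, e2, e3, e4, s1, s2, s3, s4]
      simp [hc3, hb, Ne.symm hb, ha.symm]
  by_cases hA : ∃ j : ZMod (2 * k), c (j + 1) = c j ∧ c (j - 1) = c j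
  · -- Case A: a block of length ≥ 3 exists; every opposite vertex is a singleton
    obtain ⟨j, hj1, hj2⟩ := hA
    have hsingle : ∀ v : ZMod (2 * k), c v ≠ c j → c (v + 1) ≠ c v ∧ c (v - 1) ≠ c v := by
      intro v hv
      by_contra hcon
      have d1 : v ≠ j := fun h => hv (by rw [h])
      have d2 : v + 1 ≠ j := by
        intro h
        apply hv
        have e : v = j - 1 := by linear_combination h
        rw [e, hj2]
      have d3 : v - 1 ≠ j := by
        intro h
        apply hv
        have e : v = j + 1 := by linear_combination h
        rw [e, hj1]
      have d4 : j + 1 ≠ v := fun h => hv (by rw [← h, hj1])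
      have d5 : j - 1 ≠ v := fun h => hv (by rw [← h, hj2])
      have nv1 : v + 1 ≠ v := fun h => h1 (by linear_combination h)
      have nv2 : v - 1 ≠ v := fun h => h1 (by linear_combination -h)
      have nj1 : j + 1 ≠ j := fun h => h1 (by linear_combination h)
      have nj2 : j - 1 ≠ j := fun h => h1 (by linear_combination -h)
      apply heq j v (Ne.symm hv)
      have s0 : swapColoring c j v v = c j := swap_self2 c d1
      have s1 : swapColoring c j v (v + 1) = c (v + 1) := swap_other c d2 nv1
      have s2 : swapColoring c j v (v - 1) = c (v - 1) := swap_other c d3 nv2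
      have s3 : swapColoring c j v j = c v := swap_self1 c j v
      have s4 : swapColoring c j v (j + 1) = c (j + 1) := swap_other c nj1 d4
      have s5 : swapColoring c j v (j - 1) = c (j - 1) := swap_other c nj2 d5
      constructor
      · -- Usharp c j = 0 < Usharp c' v
        have hj0 : Usharp (cycleZMod (2 * k)) c j = 0 := by
          rw [usharp_eq h1 h2]; simp [hj1, hj2]
        rw [hj0, usharp_eq h1 h2]
        simp only [s0, s1, s2]
        rcases not_and_or.mp hcon with h | h
        · have h' : c (v + 1) = c v := not_not.mp h
          have hne : c (v + 1) ≠ c j := by rw [h']; exact hv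
          rw [if_pos hne]; omega
        · have h' : c (v - 1) = c v := not_not.mp h
          have hne : c (v - 1) ≠ c j := by rw [h']; exact hv
          rw [if_pos hne]; omega
      · -- Usharp c v < Usharp c' j = 2
        have hj2' : Usharp (cycleZMod (2 * k)) (swapColoring c j v) j = 2 := by
          rw [usharp_eq h1 h2]
          simp only [s3, s4, s5, hj1, hj2]
          simp [Ne.symm hv]
        rw [hj2']
        have hle : Usharp (cycleZMod (2 * k)) c v ≤ 1 := by
          rw [usharp_eq h1 h2]
          rcases not_and_or.mp hcon with h | h
          · rw [if_neg h]; split <;> omega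
          · rw [if_neg h]; split <;> omega
        omega
    set S := (Finset.univ : Finset (ZMod (2 * k))).filter (fun v => c v ≠ c j) with hSdef
    have hScard : S.card = k := by
      have hsplit := Finset.card_filter_add_card_filter_not
        (s := (Finset.univ : Finset (ZMod (2 * k)))) (p := fun v => c v = c j)
      rw [Finset.card_univ, hcard, hsize (c j)] at hsplit
      have hre : S = (Finset.univ : Finset (ZMod (2 * k))).filter (fun v => ¬ c v = c j) := rfl
      rw [hre]
      omega
    have hSsub : ∀ v ∈ S, v ∈ D := by
      intro v hvS
      simp only [hSdef, Finset.mem_filter, Finset.mem_univ, true_and] at hvS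
      simp only [hD, Finset.mem_filter, Finset.mem_univ, true_and]
      exact (hsingle v hvS).1
    set S' := S.image (fun v => v - 1) with hS'def
    have hS'card : S'.card = k := by
      rw [hS'def, Finset.card_image_of_injective _ (fun a b h => by linear_combination h), hScard]
    have hS'sub : ∀ v ∈ S', v ∈ D := by
      intro v hv
      obtain ⟨u, huS, rfl⟩ := Finset.mem_image.mp hv
      simp only [hSdef, Finset.mem_filter, Finset.mem_univ, true_and] at huS
      simp only [hD, Finset.mem_filter, Finset.mem_univ, true_and]
      have e : u - 1 + 1 = u := by ring
      rw [e]
      exact Ne.symm (hsingle u huS).2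
    have hdisj : Disjoint S S' := by
      rw [Finset.disjoint_left]
      intro v hvS hvS'
      obtain ⟨u, huS, hvu⟩ := Finset.mem_image.mp hvS'
      simp only [hSdef, Finset.mem_filter, Finset.mem_univ, true_and] at hvS huS
      have e : v + 1 = u := by linear_combination -hvu
      have h3 : c (v + 1) ≠ c j := by rw [e]; exact huS
      exact (hsingle v hvS).1 (fin2_eq_of_ne h3 hvS)
    have hDge : 2 * k ≤ D.card := by
      have hsub : S ∪ S' ⊆ D := by
        intro v hv
        rcases Finset.mem_union.mp hv with h | h
        exacts [hSsub v h, hS'sub v h]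
      have := Finset.card_le_card hsub
      rw [Finset.card_union_of_disjoint hdisj, hScard, hS'card] at this
      omega
    omega
  · -- Case B: all blocks have length ≤ 2
    push_neg at hA
    set M := (Finset.univ : Finset (ZMod (2 * k))).filter (fun v => c (v + 1) = c v) with hM
    have hmem : ∀ v : ZMod (2 * k), v ∈ M ↔ c (v + 1) = c v := by
      intro v; simp [hM]
    have hMD : M.card + D.card = 2 * k := by
      have hsplit := Finset.card_filter_add_card_filter_not
        (s := (Finset.univ : Finset (ZMod (2 * k)))) (p := fun v => c (v + 1) = c v)
      rw [Finset.card_univ, hcard] at hsplit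
      exact hsplit
    have hgap1 : ∀ i : ZMod (2 * k), i ∈ M → i + 1 ∉ M := by
      intro i hi hi1
      rw [hmem] at hi hi1
      have e2 : i + 1 - 1 = i := by ring
      exact (hA (i + 1) hi1) (by rw [e2]; exact hi.symm)
    have hgap2 : ∀ i : ZMod (2 * k), i ∈ M → i + 2 ∉ M := by
      intro i hi hi2
      rw [hmem] at hi hi2
      have e3 : i + 2 + 1 = i + 3 := by ring
      rw [e3] at hi2
      by_cases hmid : c (i + 2) = c (i + 1)
      · refine hgap1 i ((hmem i).mpr hi) ((hmem (i + 1)).mpr ?_)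
        have e : i + 1 + 1 = i + 2 := by ring
        rw [e]; exact hmid
      · exact haabb i ⟨hi, hmid, hi2⟩
    set M1 := M.image (fun v => v + 1) with hM1
    set M2 := M.image (fun v => v + 2) with hM2
    have hM1card : M1.card = M.card :=
      Finset.card_image_of_injective _ (fun a b h => by linear_combination h)
    have hM2card : M2.card = M.card :=
      Finset.card_image_of_injective _ (fun a b h => by linear_combination h)
    have hd01 : Disjoint M M1 := by
      rw [Finset.disjoint_left]
      intro x hx hx1
      obtain ⟨m, hm, rfl⟩ := Finset.mem_image.mp hx1
      exact hgap1 m hm hx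
    have hd02 : Disjoint M M2 := by
      rw [Finset.disjoint_left]
      intro x hx hx2
      obtain ⟨m, hm, rfl⟩ := Finset.mem_image.mp hx2
      exact hgap2 m hm hx
    have hd12 : Disjoint M1 M2 := by
      rw [Finset.disjoint_left]
      intro x hx1 hx2
      obtain ⟨m, hm, rfl⟩ := Finset.mem_image.mp hx1
      obtain ⟨m', hm', he⟩ := Finset.mem_image.mp hx2
      have e : m' + 1 = m := by linear_combination he
      exact hgap1 m' hm' (by rw [e]; exact hm)
    have hunion : (M ∪ M1 ∪ M2).card = M.card + M.card + M.card := by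
      rw [Finset.card_union_of_disjoint, Finset.card_union_of_disjoint hd01, hM1card, hM2card]
      exact Finset.disjoint_union_left.mpr ⟨hd02, hd12⟩
    have hle : (M ∪ M1 ∪ M2).card ≤ 2 * k := by
      have := Finset.card_le_univ (M ∪ M1 ∪ M2)
      rwa [hcard] at this
    omega
end

section
/- Let t ≥ 3, let C_{tk} be the cycle on tk vertices (tk ≥ 3), and let c be a coloring with t types where each color class has size exactly k. If c is an equilibrium under the variety-seeking utility U_τ, then the number of monochromatic edges of c is at most 3k/2 (i.e., 2·mono(c) ≤ 3k); equivalently, the number of colorful edges satisfies 2·ce(c) ≥ 2tk − 3k. -/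
open SimpleGraph Finset

section helpers

variable {n t : ℕ}

lemma myone (hn : 3 ≤ n) : (1 : ZMod n) ≠ 0 := by
  haveI : NeZero n := ⟨by omega⟩
  intro h
  have : ((1 : ℕ) : ZMod n) = 0 := by exact_mod_cast h
  rw [ZMod.natCast_eq_zero_iff] at this
  have := Nat.le_of_dvd one_pos this
  omega

lemma mytwo (hn : 3 ≤ n) : (1 + 1 : ZMod n) ≠ 0 := by
  haveI : NeZero n := ⟨by omega⟩
  intro h
  have : ((2 : ℕ) : ZMod n) = 0 := by push_cast; exact_mod_cast h
  rw [ZMod.natCast_eq_zero_iff] at this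
  have := Nat.le_of_dvd (by norm_num) this
  omega

lemma nbhd [NeZero n] (hn : 3 ≤ n) (v : ZMod n) :
    (cycleZMod n).neighborFinset v = {v - 1, v + 1} := by
  ext w
  rw [SimpleGraph.mem_neighborFinset]
  simp only [cycleZMod, SimpleGraph.circulantGraph, SimpleGraph.fromRel_adj,
    Set.mem_singleton_iff, Finset.mem_insert, Finset.mem_singleton]
  constructor
  · rintro ⟨hne, h | h⟩
    · left; rw [← h]; ring
    · right; rw [← h]; ring
  · rintro (rfl | rfl)
    · refine ⟨?_, Or.inl (by ring)⟩
      intro h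
      exact myone hn (by linear_combination h)
    · refine ⟨?_, Or.inr (by ring)⟩
      intro h
      exact myone hn (by linear_combination -h)

lemma utau_card [NeZero n] (hn : 3 ≤ n) (c : ZMod n → Fin t) (v : ZMod n) :
    Utau (cycleZMod n) c v = (({c (v - 1), c (v + 1)} : Finset (Fin t)).erase (c v)).card := by
  unfold Utau typesIn
  rw [nbhd hn]
  simp

lemma utau_card' [NeZero n] (hn : 3 ≤ n) (c : ZMod n → Fin t) (v e : ZMod n)
    (he : e = 1 ∨ e = -1) :
    Utau (cycleZMod n) c v = (({c (v + e), c (v - e)} : Finset (Fin t)).erase (c v)).card := by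
  rcases he with rfl | rfl
  · rw [utau_card hn, Finset.pair_comm]
  · rw [utau_card hn]
    simp only [← sub_eq_add_neg, sub_neg_eq_add]


lemma swapL [NeZero n] (hn : 3 ≤ n) (c : ZMod n → Fin t)
    (heq : Equilibrium (Utau (cycleZMod n)) c) (u v e f : ZMod n)
    (he : e = 1 ∨ e = -1) (hf : f = 1 ∨ f = -1) (hne : c u ≠ c v)
    (hu1 : c (u + e) = c u) (hu2 : c (u - e) ≠ c u) (hu3 : c (u - e) ≠ c v)
    (hv1 : c (v + f) = c v) (hv2 : c (v - f) ≠ c v) (hv3 : c (v - f) ≠ c u) : False := by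
  have hE : e ≠ 0 := by
    rcases he with rfl | rfl
    · exact myone hn
    · exact fun h => myone hn (by linear_combination -h)
  have hF : f ≠ 0 := by
    rcases hf with rfl | rfl
    · exact myone hn
    · exact fun h => myone hn (by linear_combination -h)
  have huv : u ≠ v := fun h => hne (by rw [h])
  have hc'u : swapColoring c u v u = c v := by simp [swapColoring]
  have hc'v : swapColoring c u v v = c u := by simp [swapColoring, huv.symm]
  have heval : ∀ w : ZMod n, w ≠ u → w ≠ v → swapColoring c u v w = c w := by
    intro w h1 h2; simp [swapColoring, h1, h2]
  -- u's neighbors are untouched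
  have hue_u : u + e ≠ u := fun h => hE (by linear_combination h)
  have hue_v : u + e ≠ v := fun h => hne (by rw [← hu1, h])
  have hum_u : u - e ≠ u := fun h => hE (by linear_combination -h)
  have hum_v : u - e ≠ v := fun h => hu3 (by rw [h])
  have hvf_v : v + f ≠ v := fun h => hF (by linear_combination h)
  have hvf_u : v + f ≠ u := fun h => hne (by rw [← hv1, h])
  have hvm_v : v - f ≠ v := fun h => hF (by linear_combination -h)
  have hvm_u : v - f ≠ u := fun h => hv3 (by rw [h])
  apply heq u v hne
  constructor
  · -- Utau c u = 1 < 2 = Utau c' v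
    have h1 : Utau (cycleZMod n) c u = 1 := by
      rw [utau_card' hn c u e he, hu1]
      rw [show ({c u, c (u - e)} : Finset (Fin t)) = insert (c u) {c (u - e)} from rfl]
      rw [Finset.erase_insert (by simp [hu2.symm])]
      simp
    have h2 : Utau (cycleZMod n) (swapColoring c u v) v = 2 := by
      rw [utau_card' hn _ v f hf, hc'v, heval _ hvf_u hvf_v, heval _ hvm_u hvm_v, hv1]
      rw [Finset.erase_eq_of_notMem (by
        simp only [Finset.mem_insert, Finset.mem_singleton]
        push_neg
        exact ⟨hne, fun h => hv3 h.symm⟩)]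
      exact Finset.card_pair hv2.symm
    omega
  · have h1 : Utau (cycleZMod n) c v = 1 := by
      rw [utau_card' hn c v f hf, hv1]
      rw [show ({c v, c (v - f)} : Finset (Fin t)) = insert (c v) {c (v - f)} from rfl]
      rw [Finset.erase_insert (by simp [hv2.symm])]
      simp
    have h2 : Utau (cycleZMod n) (swapColoring c u v) u = 2 := by
      rw [utau_card' hn _ u e he, hc'u, heval _ hue_u hue_v, heval _ hum_u hum_v, hu1]
      rw [Finset.erase_eq_of_notMem (by
        simp only [Finset.mem_insert, Finset.mem_singleton]
        push_neg
        exact ⟨hne.symm, fun h => hu3 h.symm⟩)]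
      exact Finset.card_pair hu2.symm
    omega
  


lemma swapL0 [NeZero n] (hn : 3 ≤ n) (c : ZMod n → Fin t)
    (heq : Equilibrium (Utau (cycleZMod n)) c) (u v : ZMod n) (hne : c u ≠ c v)
    (hu1 : c (u - 1) = c u) (hu2 : c (u + 1) = c u)
    (hv1 : c (v - 1) = c v) (hv2 : c (v + 1) = c v) : False := by
  have h1 : (1 : ZMod n) ≠ 0 := myone hn
  have huv : u ≠ v := fun h => hne (by rw [h])
  have hc'u : swapColoring c u v u = c v := by simp [swapColoring]
  have hc'v : swapColoring c u v v = c u := by simp [swapColoring, huv.symm]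
  have heval : ∀ w : ZMod n, w ≠ u → w ≠ v → swapColoring c u v w = c w := by
    intro w ha hb; simp [swapColoring, ha, hb]
  have hum_u : u - 1 ≠ u := fun h => h1 (by linear_combination -h)
  have hum_v : u - 1 ≠ v := fun h => hne (by rw [← hu1, h])
  have hup_u : u + 1 ≠ u := fun h => h1 (by linear_combination h)
  have hup_v : u + 1 ≠ v := fun h => hne (by rw [← hu2, h])
  have hvm_v : v - 1 ≠ v := fun h => h1 (by linear_combination -h)
  have hvm_u : v - 1 ≠ u := fun h => hne (by rw [← hv1, h])
  have hvp_v : v + 1 ≠ v := fun h => h1 (by linear_combination h)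
  have hvp_u : v + 1 ≠ u := fun h => hne (by rw [← hv2, h])
  apply heq u v hne
  constructor
  · have hA : Utau (cycleZMod n) c u = 0 := by
      rw [utau_card hn, hu1, hu2]
      simp
    have hB : Utau (cycleZMod n) (swapColoring c u v) v = 1 := by
      rw [utau_card hn, hc'v, heval _ hvm_u hvm_v, heval _ hvp_u hvp_v, hv1, hv2]
      rw [Finset.erase_eq_of_notMem (by simp [hne])]
      simp
    omega
  · have hA : Utau (cycleZMod n) c v = 0 := by
      rw [utau_card hn, hv1, hv2]
      simp
    have hB : Utau (cycleZMod n) (swapColoring c u v) u = 1 := by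
      rw [utau_card hn, hc'u, heval _ hum_u hum_v, heval _ hup_u hup_v, hu1, hu2]
      rw [Finset.erase_eq_of_notMem (by simp [hne.symm])]
      simp
    omega

lemma edge_filter_card [NeZero n] (hn : 3 ≤ n) (Q : Sym2 (ZMod n) → Prop) [DecidablePred Q] :
    ((cycleZMod n).edgeFinset.filter Q).card
      = (Finset.univ.filter fun i : ZMod n => Q s(i, i + 1)).card := by
  have h1 : (1 : ZMod n) ≠ 0 := myone hn
  have hadj : ∀ i : ZMod n, (cycleZMod n).Adj i (i + 1) := by
    intro i
    simp only [cycleZMod, SimpleGraph.circulantGraph, SimpleGraph.fromRel_adj,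
      Set.mem_singleton_iff]
    exact ⟨fun h => h1 (by linear_combination -h), Or.inr (by ring)⟩
  symm
  apply Finset.card_bij (fun i _ => s(i, i + 1))
  · intro i hi
    rw [Finset.mem_filter] at hi ⊢
    exact ⟨SimpleGraph.mem_edgeFinset.mpr (hadj i), hi.2⟩
  · intro i _ j _ hij
    rw [Sym2.eq_iff] at hij
    rcases hij with ⟨rfl, -⟩ | ⟨h1', h2'⟩
    · rfl
    · exfalso
      apply mytwo hn
      linear_combination h2' - h1'
  · intro e he
    rw [Finset.mem_filter, SimpleGraph.mem_edgeFinset] at he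
    induction e with
    | _ a b =>
      obtain ⟨hab, hQ⟩ := he
      simp only [cycleZMod, SimpleGraph.circulantGraph, SimpleGraph.fromRel_adj,
        Set.mem_singleton_iff] at hab
      obtain ⟨-, h | h⟩ := hab
      · refine ⟨b, Finset.mem_filter.mpr ⟨Finset.mem_univ _, ?_⟩, ?_⟩
        · have hba : b + 1 = a := by linear_combination -h
          rw [hba, Sym2.eq_swap]
          exact hQ
        · have hba : b + 1 = a := by linear_combination -h
          rw [hba, Sym2.eq_swap]
      · refine ⟨a, Finset.mem_filter.mpr ⟨Finset.mem_univ _, ?_⟩, ?_⟩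
        · have hba : a + 1 = b := by linear_combination -h
          rw [hba]
          exact hQ
        · have hba : a + 1 = b := by linear_combination -h
          rw [hba]

lemma tworun [NeZero n] (c : ZMod n → Fin t) (y : Fin t) {k : ℕ}
    (hcls : (Finset.univ.filter fun i : ZMod n => c i = y).card = k)
    (h3 : ∀ i : ZMod n, ¬(c i = y ∧ c (i + 1) = y ∧ c (i + 1 + 1) = y)) :
    2 * (Finset.univ.filter fun i : ZMod n => c i = y ∧ c (i + 1) = y).card ≤ k := by
  classical
  set M := Finset.univ.filter fun i : ZMod n => c i = y ∧ c (i + 1) = y with hM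
  have hinj : Function.Injective (fun i : ZMod n => i + 1) := fun a b h => by
    simpa using h
  have hsub : M ∪ M.image (fun i => i + 1) ⊆ Finset.univ.filter fun i : ZMod n => c i = y := by
    intro i hi
    rw [Finset.mem_union] at hi
    rcases hi with hi | hi
    · rw [hM, Finset.mem_filter] at hi
      exact Finset.mem_filter.mpr ⟨Finset.mem_univ _, hi.2.1⟩
    · rw [Finset.mem_image] at hi
      obtain ⟨j, hj, rfl⟩ := hi
      rw [hM, Finset.mem_filter] at hj
      exact Finset.mem_filter.mpr ⟨Finset.mem_univ _, hj.2.2⟩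
  have hdisj : Disjoint M (M.image (fun i => i + 1)) := by
    rw [Finset.disjoint_left]
    intro i hi hi'
    rw [Finset.mem_image] at hi'
    obtain ⟨j, hj, rfl⟩ := hi'
    rw [hM, Finset.mem_filter] at hi hj
    exact h3 j ⟨hj.2.1, hj.2.2, hi.2.2⟩
  have hcc := Finset.card_le_card hsub
  rw [Finset.card_union_of_disjoint hdisj, Finset.card_image_of_injective _ hinj, hcls] at hcc
  omega

lemma endof (c : ZMod n → Fin t) (i : ZMod n) (hi : c i = c (i + 1))
    (hiso1 : c (i - 1) ≠ c i) (hiso2 : c (i + 1 + 1) ≠ c (i + 1)) (z : Fin t)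
    (hz : c (i - 1) ≠ z ∨ c (i + 1 + 1) ≠ z) :
    ∃ u e, (e = 1 ∨ e = -1) ∧ c u = c i ∧ c (u + e) = c u ∧ c (u - e) ≠ c u ∧ c (u - e) ≠ z := by
  rcases hz with hz | hz
  · exact ⟨i, 1, Or.inl rfl, rfl, hi.symm, hiso1, hz⟩
  · refine ⟨i + 1, -1, Or.inr rfl, hi.symm, ?_, ?_, ?_⟩
    · rw [add_neg_cancel_right]; exact hi
    · rwa [sub_neg_eq_add]
    · rwa [sub_neg_eq_add]

lemma Qlem [NeZero n] (hn : 3 ≤ n) (c : ZMod n → Fin t)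
    (heq : Equilibrium (Utau (cycleZMod n)) c)
    (hZ : ∀ v : ZMod n, c (v - 1) = c v → c (v + 1) ≠ c v)
    (i j : ZMod n) (hi : c i = c (i + 1)) (hj : c j = c (j + 1)) (hne : c i ≠ c j) :
    (c (i - 1) = c j ∧ c (i + 1 + 1) = c j) ∨ (c (j - 1) = c i ∧ c (j + 1 + 1) = c i) := by
  have hiso1i : c (i - 1) ≠ c i := fun h' => hZ i h' hi.symm
  have hiso2i : c (i + 1 + 1) ≠ c (i + 1) := by
    have h := hZ (i + 1)
    rw [add_sub_cancel_right] at h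
    exact h hi
  have hiso1j : c (j - 1) ≠ c j := fun h' => hZ j h' hj.symm
  have hiso2j : c (j + 1 + 1) ≠ c (j + 1) := by
    have h := hZ (j + 1)
    rw [add_sub_cancel_right] at h
    exact h hj
  by_contra hcon
  rw [not_or, not_and_or, not_and_or] at hcon
  obtain ⟨hA, hB⟩ := hcon
  obtain ⟨u, e, he, hcu, hu1, hu2, hu3⟩ := endof c i hi hiso1i hiso2i (c j) hA
  obtain ⟨v, f, hf, hcv, hv1, hv2, hv3⟩ := endof c j hj hiso1j hiso2j (c i) hB
  refine swapL hn c heq u v e f he hf ?_ hu1 hu2 ?_ hv1 hv2 ?_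
  · rw [hcu, hcv]; exact hne
  · rw [hcv]; exact hu3
  · rw [hcu]; exact hv3

end helpers

theorem stmt15 (t k : ℕ) (ht : 3 ≤ t) (hn : 3 ≤ t * k) [NeZero (t * k)]
    (c : ZMod (t * k) → Fin t)
    (hsize : ∀ i : Fin t, ((Finset.univ : Finset (ZMod (t * k))).filter fun v => c v = i).card = k)
    (heq : Equilibrium (Utau (cycleZMod (t * k))) c) :
    2 * monoCount (cycleZMod (t * k)) c ≤ 3 * k ∧
      2 * t * k ≤ 2 * ceCount (cycleZMod (t * k)) c + 3 * k := by
  classical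
  have hmono : monoCount (cycleZMod (t * k)) c
      = (Finset.univ.filter fun i : ZMod (t * k) => c i = c (i + 1)).card := by
    unfold monoCount
    rw [edge_filter_card hn]
    congr 1
    ext i
    simp [Sym2.map_pair_eq, Sym2.isDiag_iff_proj_eq]
  have hce : ceCount (cycleZMod (t * k)) c
      = (Finset.univ.filter fun i : ZMod (t * k) => ¬ c i = c (i + 1)).card := by
    unfold ceCount
    rw [edge_filter_card hn]
    congr 1
    ext i
    simp [Sym2.map_pair_eq, Sym2.isDiag_iff_proj_eq]
  have hpart : (Finset.univ.filter fun i : ZMod (t * k) => c i = c (i + 1)).card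
      + (Finset.univ.filter fun i : ZMod (t * k) => ¬ c i = c (i + 1)).card = t * k := by
    rw [Finset.card_filter_add_card_filter_not, Finset.card_univ, ZMod.card]
  suffices h : 2 * (Finset.univ.filter fun i : ZMod (t * k) => c i = c (i + 1)).card ≤ 3 * k by
    constructor
    · rw [hmono]; exact h
    · rw [hce]
      have : 2 * t * k = 2 * (t * k) := by ring
      omega
  have hk1 : 1 ≤ k := by
    rcases Nat.eq_zero_or_pos k with rfl | h
    · rw [Nat.mul_zero] at hn; omega
    · exact h
  by_cases hZ : ∃ v : ZMod (t * k), c (v - 1) = c v ∧ c (v + 1) = c v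
  · -- Case B: there is a vertex with both neighbors its own color
    obtain ⟨v0, hv01, hv02⟩ := hZ
    have K1 : ∀ w : ZMod (t * k), c (w - 1) = c w → c (w + 1) = c w → c w = c v0 := by
      intro w h1 h2
      by_contra hwa
      exact swapL0 hn c heq v0 w (fun h => hwa h.symm) hv01 hv02 h1 h2
    -- a vertex of another color exists
    have hb : ∃ w : ZMod (t * k), c w ≠ c v0 := by
      have hb1 : ((⟨0, by omega⟩ : Fin t) : Fin t) ≠ ⟨1, by omega⟩ := by
        intro h; simpa using congrArg Fin.val h
      set b : Fin t := if c v0 = ⟨0, by omega⟩ then ⟨1, by omega⟩ else ⟨0, by omega⟩ with hbdef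
      have hba : b ≠ c v0 := by
        rw [hbdef]
        split_ifs with h
        · rw [h]; exact hb1.symm
        · exact fun h' => h h'.symm
      have : 0 < ((Finset.univ : Finset (ZMod (t * k))).filter fun v => c v = b).card := by
        rw [hsize b]; omega
      obtain ⟨w, hw⟩ := Finset.card_pos.mp this
      exact ⟨w, by rw [(Finset.mem_filter.mp hw).2]; exact hba⟩
    have hex : ∃ jj : ℕ, c (v0 + (jj : ZMod (t * k))) ≠ c v0 := by
      obtain ⟨w, hw⟩ := hb
      refine ⟨(w - v0).val, ?_⟩
      have hwe : v0 + (((w - v0).val : ℕ) : ZMod (t * k)) = w := by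
        rw [ZMod.natCast_val, ZMod.cast_id]; ring
      rw [hwe]; exact hw
    set j0 := Nat.find hex with hj0def
    have hj0 := Nat.find_spec hex
    have hmin : ∀ m, m < j0 → c (v0 + (m : ZMod (t * k))) = c v0 := by
      intro m hm
      have := Nat.find_min hex hm
      exact not_ne_iff.mp this
    have hj0' : c (v0 + (j0 : ZMod (t * k))) ≠ c v0 := by rw [hj0def]; exact hj0
    have h2le : 2 ≤ j0 := by
      by_contra h
      push_neg at h
      have hcases : j0 = 0 ∨ j0 = 1 := by omega
      rcases hcases with h0 | h0 <;> rw [h0] at hj0'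
      · exact hj0' (by simp)
      · exact hj0' (by push_cast; exact hv02)
    set u := v0 + ((j0 - 1 : ℕ) : ZMod (t * k)) with hu
    have hua : c u = c v0 := hmin (j0 - 1) (by omega)
    have hunext : c (u + 1) ≠ c v0 := by
      have hcast : (((j0 - 1 : ℕ) : ZMod (t * k))) + 1 = ((j0 : ℕ) : ZMod (t * k)) := by
        have h' : (j0 - 1) + 1 = j0 := by omega
        rw [← h']; push_cast; ring
      have : u + 1 = v0 + ((j0 : ℕ) : ZMod (t * k)) := by rw [hu, add_assoc, hcast]
      rw [this]; exact hj0
    have huprev : c (u - 1) = c v0 := by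
      have hcast : (((j0 - 1 : ℕ) : ZMod (t * k))) - 1 = ((j0 - 2 : ℕ) : ZMod (t * k)) := by
        have h' : (j0 - 2) + 1 = j0 - 1 := by omega
        rw [← h']; push_cast; ring
      have : u - 1 = v0 + ((j0 - 2 : ℕ) : ZMod (t * k)) := by
        rw [hu, add_sub_assoc, hcast]
      rw [this]; exact hmin _ (by omega)
    have hxa : c (u + 1) ≠ c v0 := hunext
    have K2 : ∀ i : ZMod (t * k), c i = c (i + 1) → c i ≠ c v0 → c i ≠ c (u + 1) →
        c (i - 1) = c v0 := by
      intro i hmo hia hix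
      by_contra hw
      refine swapL hn c heq u i (-1) 1 (Or.inr rfl) (Or.inl rfl) ?_ ?_ ?_ ?_ ?_ ?_ ?_
      · rw [hua]; exact fun h => hia h.symm
      · rw [← sub_eq_add_neg, huprev, hua]
      · rw [sub_neg_eq_add, hua]; exact hunext
      · rw [sub_neg_eq_add]; exact fun h => hix h.symm
      · exact hmo.symm
      · intro h; exact hia (K1 i h hmo.symm)
      · rw [hua]; exact hw
    have no3x : ∀ i : ZMod (t * k),
        ¬(c i = c (u + 1) ∧ c (i + 1) = c (u + 1) ∧ c (i + 1 + 1) = c (u + 1)) := by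
      rintro i ⟨h1, h2, h3⟩
      apply hxa
      have := K1 (i + 1) (by rw [add_sub_cancel_right, h1, h2]) (by rw [h3, h2])
      rw [h2] at this
      exact this
    have hMa : (Finset.univ.filter fun i : ZMod (t * k) => c i = c v0 ∧ c (i + 1) = c v0).card
        + (Finset.univ.filter fun i : ZMod (t * k) => c i = c v0 ∧ ¬ c (i + 1) = c v0).card
        = k := by
      have := Finset.card_filter_add_card_filter_not
        (s := Finset.univ.filter fun i : ZMod (t * k) => c i = c v0)
        (p := fun i => c (i + 1) = c v0)
      rw [Finset.filter_filter, Finset.filter_filter, hsize (c v0)] at this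
      exact this
    have hMx : 2 * (Finset.univ.filter
        fun i : ZMod (t * k) => c i = c (u + 1) ∧ c (i + 1) = c (u + 1)).card ≤ k :=
      tworun c (c (u + 1)) (hsize (c (u + 1))) no3x
    have hD' : (((Finset.univ.filter fun i : ZMod (t * k) => c i = c (i + 1)).filter
          fun i => ¬ c i = c v0).filter fun i => ¬ c i = c (u + 1)).card
        ≤ (Finset.univ.filter fun i : ZMod (t * k) => c i = c v0 ∧ ¬ c (i + 1) = c v0).card := by
      apply Finset.card_le_card_of_injOn (fun i => i - 1)
      · intro i hi
        simp only [Finset.mem_coe, Finset.mem_filter, Finset.mem_univ, true_and] at hi ⊢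
        obtain ⟨⟨h1, h2⟩, h3⟩ := hi
        refine ⟨K2 i h1 h2 h3, ?_⟩
        rw [sub_add_cancel]
        exact h2
      · intro a _ b _ h
        have : a - 1 = b - 1 := h
        linear_combination this
    have hsplit1 := Finset.card_filter_add_card_filter_not
      (s := Finset.univ.filter fun i : ZMod (t * k) => c i = c (i + 1))
      (p := fun i => c i = c v0)
    have hsplit2 := Finset.card_filter_add_card_filter_not
      (s := (Finset.univ.filter fun i : ZMod (t * k) => c i = c (i + 1)).filter
        fun i => ¬ c i = c v0)
      (p := fun i => c i = c (u + 1))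
    have eA : (Finset.univ.filter fun i : ZMod (t * k) => c i = c (i + 1)).filter
        (fun i => c i = c v0)
        = Finset.univ.filter fun i : ZMod (t * k) => c i = c v0 ∧ c (i + 1) = c v0 := by
      ext i
      simp only [Finset.mem_filter, Finset.mem_univ, true_and]
      constructor
      · rintro ⟨h1, h2⟩; exact ⟨h2, by rw [← h1]; exact h2⟩
      · rintro ⟨h1, h2⟩; exact ⟨h1.trans h2.symm, h1⟩
    have eX : ((Finset.univ.filter fun i : ZMod (t * k) => c i = c (i + 1)).filter
        fun i => ¬ c i = c v0).filter (fun i => c i = c (u + 1))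
        = Finset.univ.filter fun i : ZMod (t * k) => c i = c (u + 1) ∧ c (i + 1) = c (u + 1) := by
      ext i
      simp only [Finset.mem_filter, Finset.mem_univ, true_and]
      constructor
      · rintro ⟨⟨h1, h2⟩, h3⟩; exact ⟨h3, by rw [← h1]; exact h3⟩
      · rintro ⟨h1, h2⟩
        exact ⟨⟨h1.trans h2.symm, by rw [h1]; exact hxa⟩, h1⟩
    rw [eA] at hsplit1
    rw [eX] at hsplit2
    omega
  · -- Case A: no vertex has both neighbors its own color
    push_neg at hZ
    have h3 : ∀ (y : Fin t) (i : ZMod (t * k)),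
        ¬(c i = y ∧ c (i + 1) = y ∧ c (i + 1 + 1) = y) := by
      rintro y i ⟨h1, h2, h3⟩
      exact hZ (i + 1) (by rw [add_sub_cancel_right, h1, h2]) (by rw [h3, h2])
    have hbound : ∀ y : Fin t,
        2 * (Finset.univ.filter fun i : ZMod (t * k) => c i = y ∧ c (i + 1) = y).card ≤ k :=
      fun y => tworun c y (hsize y) (h3 y)
    have hsum : (Finset.univ.filter fun i : ZMod (t * k) => c i = c (i + 1)).card
        = ∑ y : Fin t,
          (Finset.univ.filter fun i : ZMod (t * k) => c i = y ∧ c (i + 1) = y).card := by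
      rw [Finset.card_eq_sum_card_fiberwise
        (f := fun i => c i) (t := (Finset.univ : Finset (Fin t))) (fun x _ => Finset.mem_univ _)]
      refine Finset.sum_congr rfl fun y _ => ?_
      congr 1
      ext i
      simp only [Finset.mem_filter, Finset.mem_univ, true_and]
      constructor
      · rintro ⟨h1, h2⟩; exact ⟨h2, by rw [← h1]; exact h2⟩
      · rintro ⟨h1, h2⟩; exact ⟨h1.trans h2.symm, h1⟩
    set C : Finset (Fin t) := Finset.univ.filter fun y : Fin t =>
      (Finset.univ.filter fun i : ZMod (t * k) => c i = y ∧ c (i + 1) = y).card ≠ 0 with hCdef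
    have hC3 : C.card ≤ 3 := by
      by_contra hlt
      push_neg at hlt
      have hblock : ∀ p ∈ C, ∃ i_1 : ZMod (t * k), c i_1 = p ∧ c (i_1 + 1) = p := by
        intro p hp
        rw [hCdef, Finset.mem_filter] at hp
        obtain ⟨i_1, hi1⟩ := Finset.card_pos.mp (Nat.pos_of_ne_zero hp.2)
        rw [Finset.mem_filter] at hi1
        exact ⟨i_1, hi1.2⟩
      obtain ⟨p1, hp1⟩ := Finset.card_pos.mp (by omega : 0 < C.card)
      have : 0 < (C.erase p1).card := by rw [Finset.card_erase_of_mem hp1]; omega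
      obtain ⟨p2, hp2⟩ := Finset.card_pos.mp this
      obtain ⟨h21, hp2C⟩ := Finset.mem_erase.mp hp2
      have : 0 < ((C.erase p1).erase p2).card := by
        rw [Finset.card_erase_of_mem hp2, Finset.card_erase_of_mem hp1]; omega
      obtain ⟨p3, hp3⟩ := Finset.card_pos.mp this
      have htmp3 := Finset.mem_erase.mp hp3
      obtain ⟨h32, htmp3'⟩ := htmp3
      obtain ⟨h31, hp3C⟩ := Finset.mem_erase.mp htmp3'
      have : 0 < (((C.erase p1).erase p2).erase p3).card := by
        rw [Finset.card_erase_of_mem hp3, Finset.card_erase_of_mem hp2,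
          Finset.card_erase_of_mem hp1]; omega
      obtain ⟨p4, hp4⟩ := Finset.card_pos.mp this
      have htmp4 := Finset.mem_erase.mp hp4
      obtain ⟨h43, htmp4'⟩ := htmp4
      obtain ⟨h42, htmp4''⟩ := Finset.mem_erase.mp htmp4'
      obtain ⟨h41, hp4C⟩ := Finset.mem_erase.mp htmp4''
      obtain ⟨i1, hi1a, hi1b⟩ := hblock p1 hp1
      obtain ⟨i2, hi2a, hi2b⟩ := hblock p2 hp2C
      obtain ⟨i3, hi3a, hi3b⟩ := hblock p3 hp3C
      obtain ⟨i4, hi4a, hi4b⟩ := hblock p4 hp4C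
      have hm1 : c i1 = c (i1 + 1) := hi1a.trans hi1b.symm
      have hm2 : c i2 = c (i2 + 1) := hi2a.trans hi2b.symm
      have hm3 : c i3 = c (i3 + 1) := hi3a.trans hi3b.symm
      have hm4 : c i4 = c (i4 + 1) := hi4a.trans hi4b.symm
      have Q12 := Qlem hn c heq hZ i1 i2 hm1 hm2 (by rw [hi1a, hi2a]; exact h21.symm)
      have Q34 := Qlem hn c heq hZ i3 i4 hm3 hm4 (by rw [hi3a, hi4a]; exact h43.symm)
      rcases Q12 with ⟨ha, -⟩ | ⟨ha, -⟩ <;> rcases Q34 with ⟨hc', -⟩ | ⟨hc', -⟩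
      · rcases Qlem hn c heq hZ i1 i3 hm1 hm3 (by rw [hi1a, hi3a]; exact h31.symm) with
          ⟨he, -⟩ | ⟨he, -⟩
        · rw [ha, hi2a] at he; rw [hi3a] at he; exact h32 (he.symm)
        · rw [hc', hi4a] at he; rw [hi1a] at he; exact h41 he
      · rcases Qlem hn c heq hZ i1 i4 hm1 hm4 (by rw [hi1a, hi4a]; exact h41.symm) with
          ⟨he, -⟩ | ⟨he, -⟩
        · rw [ha, hi2a] at he; rw [hi4a] at he; exact h42 (he.symm)
        · rw [hc', hi3a] at he; rw [hi1a] at he; exact h31 he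
      · rcases Qlem hn c heq hZ i2 i3 hm2 hm3 (by rw [hi2a, hi3a]; exact h32.symm) with
          ⟨he, -⟩ | ⟨he, -⟩
        · rw [ha, hi1a] at he; rw [hi3a] at he; exact h31 (he.symm)
        · rw [hc', hi4a] at he; rw [hi2a] at he; exact h42 he
      · rcases Qlem hn c heq hZ i2 i4 hm2 hm4 (by rw [hi2a, hi4a]; exact h42.symm) with
          ⟨he, -⟩ | ⟨he, -⟩
        · rw [ha, hi1a] at he; rw [hi4a] at he; exact h41 (he.symm)
        · rw [hc', hi3a] at he; rw [hi2a] at he; exact h32 he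
    calc 2 * (Finset.univ.filter fun i : ZMod (t * k) => c i = c (i + 1)).card
        = ∑ y : Fin t, 2 * (Finset.univ.filter
            fun i : ZMod (t * k) => c i = y ∧ c (i + 1) = y).card := by
          rw [hsum, Finset.mul_sum]
      _ = ∑ y ∈ C, 2 * (Finset.univ.filter
            fun i : ZMod (t * k) => c i = y ∧ c (i + 1) = y).card := by
          symm
          apply Finset.sum_subset (Finset.filter_subset _ _)
          intro y _ hy
          simp only [Finset.mem_filter, Finset.mem_univ, true_and, not_not, not_ne_iff] at hy
          omega
      _ ≤ C.card * k := by
          have := Finset.sum_le_card_nsmul C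
            (fun y => 2 * (Finset.univ.filter
              fun i : ZMod (t * k) => c i = y ∧ c (i + 1) = y).card) k
            (fun y _ => hbound y)
          simpa using this
      _ ≤ 3 * k := Nat.mul_le_mul_right k hC3
end
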